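/- arXiv:1206.5783 — 8 statements merged into one kernel-verified Lean document; each statement's English description precedes it below -/
import Mathlib

section
/- A polynomial p ∈ ℝ[x₁,…,xₙ] satisfies p ∈ S if and only if p(x₁²,…,xₙ²) is a sum of squares of polynomials in ℝ[x₁,…,xₙ]. -/
open MvPolynomial

namespace SOSAux

variable {n : ℕ}

/-- The substitution `xᵢ ↦ xᵢ²`. -/
noncomputable def B (n : ℕ) : MvPolynomial (Fin n) ℝ →ₐ[ℝ] MvPolynomial (Fin n) ℝ :=
  bind₁ fun i : Fin n => (X i : MvPolynomial (Fin n) ℝ) ^ 2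

lemma B_monomial (m : Fin n →₀ ℕ) (c : ℝ) : B n (monomial m c) = monomial (2 • m) c := by
  rw [B, bind₁_monomial]
  rw [monomial_eq, Finsupp.prod]
  have hsupp : (2 • m).support = m.support := by
    ext j; simp [Finsupp.mem_support_iff]
  rw [hsupp]
  congr 1
  apply Finset.prod_congr rfl
  intro i _
  rw [← pow_mul, Finsupp.smul_apply, smul_eq_mul, mul_comm]

lemma B_apply (p : MvPolynomial (Fin n) ℝ) :
    B n p = ∑ m ∈ p.support, monomial (2 • m) (coeff m p) := by
  conv_lhs => rw [p.as_sum, map_sum]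
  exact Finset.sum_congr rfl fun m _ => B_monomial m _

lemma two_smul_injective :
    Function.Injective (fun m : Fin n →₀ ℕ => 2 • m) := by
  intro a b h
  ext j
  have := congrArg (fun f : Fin n →₀ ℕ => f j) h
  simp only [Finsupp.smul_apply, smul_eq_mul] at this
  omega

lemma coeff_B (p : MvPolynomial (Fin n) ℝ) (m : Fin n →₀ ℕ) :
    coeff (2 • m) (B n p) = coeff m p := by
  rw [B_apply, coeff_sum]
  have : ∀ m' ∈ p.support,
      coeff (2 • m) (monomial (2 • m') (coeff m' p)) =
      if m' = m then coeff m' p else 0 := by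
    intro m' _
    rw [coeff_monomial]
    congr 1
    simp only [eq_iff_iff]
    constructor
    · intro h; exact two_smul_injective h
    · intro h; rw [h]
  rw [Finset.sum_congr rfl this, Finset.sum_ite_eq' p.support m (fun m' => coeff m' p)]
  by_cases hm : m ∈ p.support
  · simp [hm]
  · simp [hm, MvPolynomial.notMem_support_iff.mp hm]

lemma B_injective : Function.Injective (B n) := by
  intro a b h
  ext m
  rw [← coeff_B a m, ← coeff_B b m, h]

/-- Parity of a monomial exponent. -/
def par (m : Fin n →₀ ℕ) : Fin n → Fin 2 := fun j => ⟨m j % 2, Nat.mod_lt _ two_pos⟩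

lemma par_add (m m' : Fin n →₀ ℕ) : par (m + m') = par m + par m' := by
  funext j
  simp only [par, Pi.add_apply, Fin.add_def, Finsupp.add_apply]
  congr 1
  omega

/-- Parity-ε part of a polynomial. -/
noncomputable def T (ε : Fin n → Fin 2) (q : MvPolynomial (Fin n) ℝ) : MvPolynomial (Fin n) ℝ :=
  ∑ m ∈ q.support, if par m = ε then monomial m (coeff m q) else 0

lemma coeff_T (ε : Fin n → Fin 2) (q : MvPolynomial (Fin n) ℝ) (m : Fin n →₀ ℕ) :
    coeff m (T ε q) = if par m = ε then coeff m q else 0 := by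
  rw [T, coeff_sum]
  have : ∀ m' ∈ q.support,
      coeff m (if par m' = ε then monomial m' (coeff m' q) else 0) =
      if m' = m then (if par m = ε then coeff m q else 0) else 0 := by
    intro m' _
    by_cases h : m' = m
    · subst h; by_cases hp : par m' = ε <;> simp [hp, coeff_monomial]
    · by_cases hp : par m' = ε <;> simp [hp, coeff_monomial, h]
  rw [Finset.sum_congr rfl this, Finset.sum_ite_eq' q.support m]
  by_cases hm : m ∈ q.support
  · simp [hm]
  · simp [hm, MvPolynomial.notMem_support_iff.mp hm]

lemma T_add (ε : Fin n → Fin 2) (a b : MvPolynomial (Fin n) ℝ) :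
    T ε (a + b) = T ε a + T ε b := by
  ext m
  simp only [coeff_T, coeff_add]
  split <;> simp

lemma T_zero (ε : Fin n → Fin 2) : T ε (0 : MvPolynomial (Fin n) ℝ) = 0 := by
  ext m; simp [coeff_T]

lemma T_sum {α : Type*} (ε : Fin n → Fin 2) (s : Finset α) (f : α → MvPolynomial (Fin n) ℝ) :
    T ε (∑ a ∈ s, f a) = ∑ a ∈ s, T ε (f a) := by
  classical
  induction s using Finset.induction_on with
  | empty => simp [T_zero]
  | insert _ _ h ih => rw [Finset.sum_insert h, Finset.sum_insert h, T_add, ih]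

lemma sum_T (q : MvPolynomial (Fin n) ℝ) : ∑ ε : Fin n → Fin 2, T ε q = q := by
  ext m
  rw [coeff_sum]
  simp only [coeff_T]
  rw [Finset.sum_ite_eq (Finset.univ) (par m) (fun _ => coeff m q)]
  simp

/-- `Hom ε a` : all monomials of `a` have parity `ε`. -/
def Hom (ε : Fin n → Fin 2) (a : MvPolynomial (Fin n) ℝ) : Prop :=
  ∀ m, coeff m a ≠ 0 → par m = ε

lemma hom_T (ε : Fin n → Fin 2) (q : MvPolynomial (Fin n) ℝ) : Hom ε (T ε q) := by
  intro m hm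
  rw [coeff_T] at hm
  by_contra h
  simp [h] at hm

lemma T_eq_self {ε : Fin n → Fin 2} {q : MvPolynomial (Fin n) ℝ} (h : Hom ε q) : T ε q = q := by
  ext m
  rw [coeff_T]
  by_cases hc : coeff m q = 0
  · simp [hc]
  · simp [h m hc]

lemma T_eq_zero {δ ε : Fin n → Fin 2} {q : MvPolynomial (Fin n) ℝ} (h : Hom δ q)
    (hne : δ ≠ ε) : T ε q = 0 := by
  ext m
  rw [coeff_T]
  by_cases hc : coeff m q = 0
  · simp [hc]
  · have := h m hc
    simp [this, hne]

lemma hom_mul {ε ε' : Fin n → Fin 2} {a b : MvPolynomial (Fin n) ℝ}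
    (ha : Hom ε a) (hb : Hom ε' b) : Hom (ε + ε') (a * b) := by
  intro m hm
  rw [coeff_mul] at hm
  obtain ⟨⟨u, v⟩, huv, hne⟩ := Finset.exists_ne_zero_of_sum_ne_zero hm
  have hsum : u + v = m := Finset.HasAntidiagonal.mem_antidiagonal.mp huv
  have hu : coeff u a ≠ 0 := fun h => hne (by simp [h])
  have hv : coeff v b ≠ 0 := fun h => hne (by simp [h])
  rw [← hsum, par_add, ha u hu, hb v hv]

lemma fin2_add_self : ∀ a : Fin 2, a + a = 0 := by decide

lemma fin2_add_eq_zero_iff : ∀ a b : Fin 2, a + b = 0 ↔ a = b := by decide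

lemma eps_add_self (ε : Fin n → Fin 2) : ε + ε = 0 := by
  funext j; exact fin2_add_self (ε j)

lemma eps_add_ne_zero {ε ε' : Fin n → Fin 2} (h : ε ≠ ε') : ε + ε' ≠ 0 := by
  intro h0
  apply h
  funext j
  have := congrFun h0 j
  exact (fin2_add_eq_zero_iff (ε j) (ε' j)).mp this

lemma hom_B_zero (p : MvPolynomial (Fin n) ℝ) : Hom 0 (B n p) := by
  intro m hm
  rw [B_apply, coeff_sum] at hm
  obtain ⟨m', _, hne⟩ := Finset.exists_ne_zero_of_sum_ne_zero hm
  rw [coeff_monomial] at hne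
  have : 2 • m' = m := by by_contra h; simp [h] at hne
  subst this
  funext j
  simp only [par, Finsupp.smul_apply, smul_eq_mul, Pi.zero_apply]
  ext
  simp [Nat.mul_mod_right]

/-- The `Finsupp` exponent corresponding to `ε`. -/
noncomputable def em (ε : Fin n → Fin 2) : Fin n →₀ ℕ :=
  Finsupp.equivFunOnFinite.symm fun j => (ε j : ℕ)

lemma em_apply (ε : Fin n → Fin 2) (j : Fin n) : em ε j = (ε j : ℕ) := rfl

lemma mono_em_eq (ε : Fin n → Fin 2) :
    (monomial (em ε) (1 : ℝ) : MvPolynomial (Fin n) ℝ) = ∏ j, X j ^ (ε j : ℕ) := by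
  rw [← prod_X_pow_eq_monomial,
    Finset.prod_subset (Finset.subset_univ (em ε).support)
      (fun j _ hj => by rw [Finsupp.notMem_support_iff.mp hj, pow_zero])]
  rfl

/-- Key decomposition: the parity-ε part of any polynomial is `x^ε` times an even polynomial. -/
lemma key_decomp (ε : Fin n → Fin 2) (x : MvPolynomial (Fin n) ℝ) :
    ∃ v : MvPolynomial (Fin n) ℝ, T ε x = monomial (em ε) 1 * B n v := by
  classical
  refine ⟨∑ m ∈ (T ε x).support,
    monomial (Finsupp.equivFunOnFinite.symm fun j => (m j - (ε j : ℕ)) / 2)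
      (coeff m (T ε x)), ?_⟩
  rw [map_sum, Finset.mul_sum]
  conv_lhs => rw [(T ε x).as_sum]
  apply Finset.sum_congr rfl
  intro m hm
  rw [B_monomial, monomial_mul, one_mul]
  have hpar : par m = ε := hom_T ε x m (MvPolynomial.mem_support_iff.mp hm)
  have hexp : em ε + 2 • (Finsupp.equivFunOnFinite.symm
      fun j => (m j - (ε j : ℕ)) / 2) = m := by
    ext j
    have h1 : m j % 2 = (ε j : ℕ) := congrArg Fin.val (congrFun hpar j)
    have h2 : ((ε j : ℕ)) < 2 := (ε j).isLt
    simp only [Finsupp.add_apply, Finsupp.smul_apply, smul_eq_mul, em_apply,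
      Finsupp.coe_equivFunOnFinite_symm]
    omega
  rw [hexp]

lemma key_decomp_sq (ε : Fin n → Fin 2) (x : MvPolynomial (Fin n) ℝ) :
    ∃ v : MvPolynomial (Fin n) ℝ,
      T ε x * T ε x = B n (v * v * monomial (em ε) 1) := by
  obtain ⟨v, hv⟩ := key_decomp ε x
  refine ⟨v, ?_⟩
  rw [hv, map_mul, map_mul, B_monomial, mul_mul_mul_comm, monomial_mul, mul_one,
    ← two_smul ℕ (em ε)]
  ring

/-- The main backward induction. -/
lemma backward (q : MvPolynomial (Fin n) ℝ) (hq : IsSumSq q) :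
    ∃ r : (Fin n → Fin 2) → MvPolynomial (Fin n) ℝ,
      (∀ ε, IsSumSq (r ε)) ∧
      T 0 q = B n (∑ ε : Fin n → Fin 2, r ε * monomial (em ε) 1) := by
  classical
  induction hq with
  | zero =>
    exact ⟨0, fun _ => IsSumSq.zero, by simp [T_zero]⟩
  | @sq_add a s hs ih =>
    obtain ⟨r, hr, hTs⟩ := ih
    choose v hv using fun ε => key_decomp_sq ε a
    refine ⟨fun ε => v ε * v ε + r ε, fun ε => IsSumSq.sq_add _ (hr ε), ?_⟩
    have haa : T 0 (a * a) = ∑ ε : Fin n → Fin 2, T ε a * T ε a := by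
      conv_lhs => rw [show a * a = (∑ ε : Fin n → Fin 2, T ε a) * (∑ ε : Fin n → Fin 2, T ε a)
        by rw [sum_T]]
      rw [Finset.sum_mul_sum, T_sum]
      rw [Finset.sum_congr rfl (fun ε _ => T_sum 0 Finset.univ _)]
      have hterm : ∀ ε ε' : Fin n → Fin 2,
          T 0 (T ε a * T ε' a) = if ε' = ε then T ε' a * T ε' a else 0 := by
        intro ε ε'
        by_cases h : ε' = ε
        · subst h
          rw [if_pos rfl]
          exact T_eq_self (by rw [← eps_add_self ε']; exact hom_mul (hom_T _ _) (hom_T _ _))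
        · rw [if_neg h]
          exact T_eq_zero (hom_mul (hom_T ε a) (hom_T ε' a))
            (eps_add_ne_zero (fun hh => h hh.symm))
      calc ∑ ε : Fin n → Fin 2, ∑ ε' : Fin n → Fin 2, T 0 (T ε a * T ε' a)
          = ∑ ε : Fin n → Fin 2, ∑ ε' : Fin n → Fin 2,
              (if ε' = ε then T ε' a * T ε' a else 0) := by
            exact Finset.sum_congr rfl fun ε _ =>
              Finset.sum_congr rfl fun ε' _ => hterm ε ε'
        _ = ∑ ε : Fin n → Fin 2, T ε a * T ε a := by
            exact Finset.sum_congr rfl fun ε _ => by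
              rw [Finset.sum_ite_eq' Finset.univ ε (fun ε' => T ε' a * T ε' a)]
              simp
    rw [T_add, haa, hTs]
    rw [Finset.sum_congr rfl (fun ε _ => hv ε)]
    rw [← map_sum, ← map_add, ← Finset.sum_add_distrib]
    congr 1
    apply Finset.sum_congr rfl
    intro ε _
    ring

/-- A ring hom image of a sum of squares is a sum of squares. -/
lemma IsSumSq.map' {R S : Type*} [CommRing R] [CommRing S] (f : R →+* S) {a : R}
    (h : IsSumSq a) : IsSumSq (f a) := by
  induction h with
  | zero => rw [map_zero]; exact IsSumSq.zero
  | @sq_add x s _ ih => rw [map_add, map_mul]; exact IsSumSq.sq_add _ ih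

lemma IsSumSq.mul_self_mul {R : Type*} [CommRing R] {s : R} (h : IsSumSq s) (y : R) :
    IsSumSq (s * (y * y)) := by
  induction h with
  | zero => rw [zero_mul]; exact IsSumSq.zero
  | @sq_add x t _ ih =>
    have : (x * x + t) * (y * y) = (x * y) * (x * y) + t * (y * y) := by ring
    rw [this]
    exact IsSumSq.sq_add _ ih

lemma IsSumSq.finset_sum {R : Type*} [CommRing R] {α : Type*} (s : Finset α) (f : α → R)
    (h : ∀ a ∈ s, IsSumSq (f a)) : IsSumSq (∑ a ∈ s, f a) := by
  classical
  induction s using Finset.induction_on with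
  | empty => simpa using IsSumSq.zero
  | insert _ _ hnot ih =>
    rw [Finset.sum_insert hnot]
    exact IsSumSq.add (h _ (Finset.mem_insert_self _ _))
      (ih fun a ha => h a (Finset.mem_insert_of_mem ha))

end SOSAux

def InS (n : ℕ) (p : MvPolynomial (Fin n) ℝ) : Prop :=
  ∃ r : (Fin n → Fin 2) → MvPolynomial (Fin n) ℝ,
    (∀ ε, IsSumSq (r ε)) ∧
    p = ∑ ε : Fin n → Fin 2, r ε * ∏ j, X j ^ (ε j : ℕ)

open SOSAux in
theorem mem_S_iff_subst_squares_isSumSq (n : ℕ) (p : MvPolynomial (Fin n) ℝ) :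
    InS n p ↔ IsSumSq (bind₁ (fun i : Fin n => (X i : MvPolynomial (Fin n) ℝ) ^ 2) p) := by
  have hB : ∀ q : MvPolynomial (Fin n) ℝ,
      bind₁ (fun i : Fin n => (X i : MvPolynomial (Fin n) ℝ) ^ 2) q = B n q := fun _ => rfl
  rw [hB]
  constructor
  · rintro ⟨r, hr, rfl⟩
    rw [map_sum]
    apply IsSumSq.finset_sum
    intro ε _
    rw [map_mul]
    have : B n (∏ j, X j ^ (ε j : ℕ)) = (∏ j, X j ^ (ε j : ℕ)) * (∏ j, X j ^ (ε j : ℕ)) := by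
      rw [map_prod]
      rw [← Finset.prod_mul_distrib]
      apply Finset.prod_congr rfl
      intro j _
      rw [map_pow, B]
      rw [bind₁_X_right]
      ring
    rw [this]
    exact IsSumSq.mul_self_mul (IsSumSq.map' (B n).toRingHom (hr ε)) _
  · intro h
    obtain ⟨r, hr, hT⟩ := backward _ h
    have h0 : T 0 (B n p) = B n p := T_eq_self (hom_B_zero p)
    rw [h0] at hT
    have := B_injective hT
    refine ⟨r, hr, ?_⟩
    rw [this]
    apply Finset.sum_congr rfl
    intro ε _
    rw [mono_em_eq]
end

section
/- Let α, β be partitions of d into at most n parts with α ⊵ β in dominance order (i.e., α₁+…+α_k ≥ β₁+…+β_k for all k, with equal total sum d). Then for all nonnegative reals x₁,…,xₙ, the normalized monomial symmetric functions satisfy [α](x) ≥ [β](x), where [α] = (1/n!) Σ_{σ∈Sₙ} Π_j x_{σ(j)}^{α_j} (Muirhead's inequality). -/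
open Finset

private def psum {n : ℕ} (γ : Fin n → ℕ) (k : ℕ) : ℕ :=
  ∑ i ∈ univ.filter (fun i : Fin n => (i : ℕ) < k), γ i

private lemma psum_zero {n : ℕ} (γ : Fin n → ℕ) : psum γ 0 = 0 := by
  unfold psum
  simp

private lemma psum_succ {n : ℕ} (γ : Fin n → ℕ) {k : ℕ} (hk : k < n) :
    psum γ (k + 1) = psum γ k + γ ⟨k, hk⟩ := by
  unfold psum
  have h : univ.filter (fun i : Fin n => (i : ℕ) < k + 1)
      = insert (⟨k, hk⟩ : Fin n) (univ.filter (fun i : Fin n => (i : ℕ) < k)) := by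
    ext m
    simp [Fin.ext_iff]
    omega
  rw [h, Finset.sum_insert (by simp)]
  omega

private lemma psum_mono {n : ℕ} (γ : Fin n → ℕ) {k l : ℕ} (h : k ≤ l) :
    psum γ k ≤ psum γ l := by
  unfold psum
  apply Finset.sum_le_sum_of_subset
  intro m hm
  simp only [Finset.mem_filter, Finset.mem_univ, true_and] at hm ⊢
  omega

private lemma psum_top {n : ℕ} (γ : Fin n → ℕ) {k : ℕ} (hk : n ≤ k) :
    psum γ k = ∑ i, γ i := by
  unfold psum
  apply Finset.sum_congr _ (fun _ _ => rfl)
  apply Finset.filter_true_of_mem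
  intro m _
  omega

private lemma pow_pair {X Y : ℝ} (hX : 0 ≤ X) (hY : 0 ≤ Y) (b p : ℕ) :
    X ^ (b+1+p) * Y ^ (b+1) + Y ^ (b+1+p) * X ^ (b+1) ≤
    X ^ (b+p+2) * Y ^ b + Y ^ (b+p+2) * X ^ b := by
  have h1 : 0 ≤ (X - Y) * (X ^ (p+1) - Y ^ (p+1)) := by
    rcases le_total X Y with h | h
    · have := pow_le_pow_left₀ hX h (p+1)
      nlinarith
    · have := pow_le_pow_left₀ hY h (p+1)
      nlinarith
  have h2 : 0 ≤ X ^ b * Y ^ b * ((X - Y) * (X ^ (p+1) - Y ^ (p+1))) :=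
    mul_nonneg (mul_nonneg (pow_nonneg hX b) (pow_nonneg hY b)) h1
  have key : X ^ (b+p+2) * Y ^ b + Y ^ (b+p+2) * X ^ b
      - (X ^ (b+1+p) * Y ^ (b+1) + Y ^ (b+1+p) * X ^ (b+1))
      = X ^ b * Y ^ b * ((X - Y) * (X ^ (p+1) - Y ^ (p+1))) := by ring
  linarith


private lemma transfer {n : ℕ} (x : Fin n → ℝ) (hx : ∀ i, 0 ≤ x i)
    (i j : Fin n) (hij : i ≠ j) (β β' : Fin n → ℕ)
    (hoff : ∀ k, k ≠ i → k ≠ j → β' k = β k)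
    (key : ∀ X Y : ℝ, 0 ≤ X → 0 ≤ Y →
      X ^ β i * Y ^ β j + Y ^ β i * X ^ β j ≤
      X ^ β' i * Y ^ β' j + Y ^ β' i * X ^ β' j) :
    ∑ σ : Equiv.Perm (Fin n), ∏ k, x (σ k) ^ β k ≤
    ∑ σ : Equiv.Perm (Fin n), ∏ k, x (σ k) ^ β' k := by
  have hswap : ∀ γ : Fin n → ℕ,
      ∑ σ : Equiv.Perm (Fin n), ∏ k, x ((σ * Equiv.swap i j) k) ^ γ k
      = ∑ σ : Equiv.Perm (Fin n), ∏ k, x (σ k) ^ γ k :=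
    fun γ => Fintype.sum_equiv (Equiv.mulRight (Equiv.swap i j)) _ _ (fun σ => rfl)
  have hmem : j ∈ univ.erase i := by simp [hij.symm]
  have main : ∀ σ : Equiv.Perm (Fin n),
      (∏ k, x (σ k) ^ β k) + ∏ k, x ((σ * Equiv.swap i j) k) ^ β k ≤
      (∏ k, x (σ k) ^ β' k) + ∏ k, x ((σ * Equiv.swap i j) k) ^ β' k := by
    intro σ
    have hprod : ∀ (γ : Fin n → ℕ) (y : Fin n → ℝ),
        ∏ k, y k ^ γ k = y i ^ γ i * (y j ^ γ j * ∏ k ∈ (univ.erase i).erase j, y k ^ γ k) := by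
      intro γ y
      rw [← Finset.mul_prod_erase univ _ (mem_univ i), ← Finset.mul_prod_erase _ _ hmem]
    set R : ℝ := ∏ k ∈ (univ.erase i).erase j, x (σ k) ^ β k with hR
    have hrest : ∀ (γ : Fin n → ℕ) (y : Fin n → ℝ),
        (∀ k, k ≠ i → k ≠ j → y k ^ γ k = x (σ k) ^ β k) →
        ∏ k ∈ (univ.erase i).erase j, y k ^ γ k = R := by
      intro γ y h
      apply Finset.prod_congr rfl
      intro k hk
      simp only [Finset.mem_erase, Finset.mem_univ] at hk
      exact h k hk.2.1 hk.1
    have hsw : ∀ k : Fin n, k ≠ i → k ≠ j → (Equiv.swap i j) k = k :=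
      fun k h1 h2 => Equiv.swap_apply_of_ne_of_ne h1 h2
    have e1 : (∏ k, x (σ k) ^ β k) = x (σ i) ^ β i * (x (σ j) ^ β j * R) :=
      hprod β (fun k => x (σ k))
    have e2 : (∏ k, x ((σ * Equiv.swap i j) k) ^ β k)
        = x (σ j) ^ β i * (x (σ i) ^ β j * R) := by
      rw [hprod β (fun k => x ((σ * Equiv.swap i j) k))]
      simp only [Equiv.Perm.mul_apply, Equiv.swap_apply_left, Equiv.swap_apply_right]
      rw [hrest β _ (fun k h1 h2 => by rw [hsw k h1 h2])]
    have e3 : (∏ k, x (σ k) ^ β' k) = x (σ i) ^ β' i * (x (σ j) ^ β' j * R) := by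
      rw [hprod β' (fun k => x (σ k))]
      rw [hrest β' _ (fun k h1 h2 => by rw [hoff k h1 h2])]
    have e4 : (∏ k, x ((σ * Equiv.swap i j) k) ^ β' k)
        = x (σ j) ^ β' i * (x (σ i) ^ β' j * R) := by
      rw [hprod β' (fun k => x ((σ * Equiv.swap i j) k))]
      simp only [Equiv.Perm.mul_apply, Equiv.swap_apply_left, Equiv.swap_apply_right]
      rw [hrest β' _ (fun k h1 h2 => by
        rw [hsw k h1 h2, hoff k h1 h2])]
    rw [e1, e2, e3, e4]
    have hRnn : 0 ≤ R := Finset.prod_nonneg (fun k _ => pow_nonneg (hx _) _)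
    have := mul_le_mul_of_nonneg_right (key (x (σ i)) (x (σ j)) (hx _) (hx _)) hRnn
    nlinarith [this]
  have hsum := Finset.sum_le_sum (fun σ (_ : σ ∈ univ) => main σ)
  rw [Finset.sum_add_distrib, Finset.sum_add_distrib, hswap β, hswap β'] at hsum
  linarith

private lemma muirhead_aux {n : ℕ} (α : Fin n → ℕ)
    (hα : ∀ i j : Fin n, i ≤ j → α j ≤ α i)
    (x : Fin n → ℝ) (hx : ∀ i, 0 ≤ x i) :
    ∀ (N : ℕ) (β : Fin n → ℕ),
      (∀ i j : Fin n, i ≤ j → β j ≤ β i) →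
      (∑ i, β i = ∑ i, α i) →
      (∀ k, psum β k ≤ psum α k) →
      (∑ k ∈ range (n+1), (psum α k - psum β k)) ≤ N →
      ∑ σ : Equiv.Perm (Fin n), ∏ k, x (σ k) ^ β k ≤
      ∑ σ : Equiv.Perm (Fin n), ∏ k, x (σ k) ^ α k := by
  intro N
  induction N with
  | zero =>
    intro β hβ hβd hdom hM
    -- measure 0 forces β = α
    have hz : ∀ k ∈ range (n+1), psum α k - psum β k = 0 := by
      intro k hk
      have h0 : ∑ k ∈ range (n+1), (psum α k - psum β k) = 0 := Nat.le_zero.mp hM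
      exact (Finset.sum_eq_zero_iff.mp h0) k hk
    have heq : ∀ k, k ≤ n → psum α k = psum β k := by
      intro k hk
      have := hz k (by simp; omega)
      have := hdom k
      omega
    have : β = α := by
      funext m
      have h1 := psum_succ α m.isLt
      have h2 := psum_succ β m.isLt
      have e1 := heq m.val (by omega)
      have e2 := heq (m.val + 1) (by omega)
      have : (⟨m.val, m.isLt⟩ : Fin n) = m := rfl
      rw [this] at h1 h2
      omega
    rw [this]
  | succ N ih =>
    intro β hβ hβd hdom hM
    by_cases hba : β = α
    · rw [hba]
    -- find first index where they differ
    have hdiff : ∃ m : ℕ, ∃ h : m < n, α ⟨m, h⟩ ≠ β ⟨m, h⟩ := by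
      by_contra hc
      push_neg at hc
      exact hba (funext fun m => (hc m.val m.isLt).symm)
    classical
    obtain ⟨i, hspec, hminr⟩ : ∃ i, (∃ h : i < n, α ⟨i, h⟩ ≠ β ⟨i, h⟩) ∧
        (∀ m, m < i → ¬ ∃ h : m < n, α ⟨m, h⟩ ≠ β ⟨m, h⟩) :=
      ⟨Nat.find hdiff, Nat.find_spec hdiff, fun m hm => Nat.find_min hdiff hm⟩
    obtain ⟨hin, hnei⟩ := hspec
    have hmin : ∀ m (hm : m < n), m < i → α ⟨m, hm⟩ = β ⟨m, hm⟩ := by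
      intro m hm hmi
      have := hminr m hmi
      push_neg at this
      exact this hm
    -- partial sums agree up to i
    have hpsum_eq : ∀ k, k ≤ i → psum α k = psum β k := by
      intro k hk
      unfold psum
      apply Finset.sum_congr rfl
      intro m hm
      simp only [Finset.mem_filter, Finset.mem_univ, true_and] at hm
      have h := hmin m.val m.isLt (by omega)
      rwa [Fin.eta] at h
    -- α exceeds β at i
    have hαβi : β ⟨i, hin⟩ + 1 ≤ α ⟨i, hin⟩ := by
      have h1 := hdom (i+1)
      rw [psum_succ α hin, psum_succ β hin, hpsum_eq i le_rfl] at h1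
      omega
    -- i + 1 < n
    have hi1 : i + 1 < n := by
      by_contra hc
      have h1 : psum α (i+1) = ∑ k, α k := psum_top α (by omega)
      have h2 : psum β (i+1) = ∑ k, β k := psum_top β (by omega)
      rw [psum_succ α hin] at h1
      rw [psum_succ β hin] at h2
      have := hpsum_eq i le_rfl
      omega
    -- find j : end of the constant block of β after i
    have hjex : ∃ m : ℕ, i < m ∧ m < n ∧
        (m = n - 1 ∨ ∃ h : m + 1 < n, β ⟨m+1, h⟩ < β ⟨m, by omega⟩) := by
      refine ⟨n - 1, by omega, by omega, Or.inl rfl⟩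
    obtain ⟨j, hjspec, hjminr⟩ : ∃ j, (i < j ∧ j < n ∧
        (j = n - 1 ∨ ∃ h : j + 1 < n, β ⟨j+1, h⟩ < β ⟨j, by omega⟩)) ∧
        (∀ m, m < j → ¬ (i < m ∧ m < n ∧
          (m = n - 1 ∨ ∃ h : m + 1 < n, β ⟨m+1, h⟩ < β ⟨m, by omega⟩))) :=
      ⟨Nat.find hjex, Nat.find_spec hjex, fun m hm => Nat.find_min hjex hm⟩
    obtain ⟨hij, hjn, hjor⟩ := hjspec
    have hIJ : (⟨i, hin⟩ : Fin n) ≠ ⟨j, hjn⟩ := by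
      intro h
      have := congrArg Fin.val h
      simp only at this
      omega
    -- β is constant on the block (i, j]
    have hblock : ∀ m (h1 : i < m) (h2 : m < j),
        β ⟨m+1, by omega⟩ = β ⟨m, by omega⟩ := by
      intro m h1 h2
      have hmn : m < n := by omega
      have := hjminr m h2
      push_neg at this
      have h3 := this h1 hmn
      rcases h3 with ⟨hne, h4⟩
      have hm1 : m + 1 < n := by omega
      have h5 := h4 hm1
      have h6 := hβ ⟨m, hmn⟩ ⟨m+1, hm1⟩ (by simp [Fin.le_def])
      omega
    -- strict dominance inside the window
    have claim : ∀ k, i < k → k ≤ j → psum β k + 1 ≤ psum α k := by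
      intro k
      induction k with
      | zero => omega
      | succ k ihk =>
        intro h1 h2
        rcases Nat.lt_or_ge i k with h3 | h3
        · have h4 := ihk h3 (by omega)
          by_contra hcon
          push_neg at hcon
          have hkn : k < n := by omega
          have hk1n : k + 1 < n := by omega
          have hcon' : psum α (k+1) ≤ psum β (k+1) := by
            have := hdom (k+1); omega
          rw [psum_succ α hkn, psum_succ β hkn] at hcon'
          have hb : β ⟨k+1, hk1n⟩ = β ⟨k, hkn⟩ := hblock k h3 (by omega)
          have ha : α ⟨k+1, hk1n⟩ ≤ α ⟨k, hkn⟩ :=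
            hα ⟨k, hkn⟩ ⟨k+1, hk1n⟩ (by simp [Fin.le_def])
          have hd := hdom (k+2)
          rw [psum_succ α hk1n, psum_succ β hk1n, psum_succ α hkn, psum_succ β hkn] at hd
          omega
        · have hki : k = i := by omega
          rw [hki, psum_succ α hin, psum_succ β hin, hpsum_eq i le_rfl]
          omega
    -- β at j is positive
    have hβj1 : 1 ≤ β ⟨j, hjn⟩ := by
      by_contra hc
      push_neg at hc
      have hzero : ∀ m : Fin n, j ≤ m.val → β m = 0 := by
        intro m hm
        have := hβ ⟨j, hjn⟩ m (by simpa [Fin.le_def] using hm)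
        omega
      have heqn : psum β n = psum β j := by
        unfold psum
        symm
        apply Finset.sum_subset
        · intro m hm
          simp only [Finset.mem_filter, Finset.mem_univ, true_and] at hm ⊢
          omega
        · intro m _ hm
          simp only [Finset.mem_filter, Finset.mem_univ, true_and, not_lt] at hm
          exact hzero m hm
      have h1 := claim j hij le_rfl
      have h2 : psum α j ≤ psum α n := psum_mono α (by omega)
      have h3 : psum α n = ∑ k, α k := psum_top α le_rfl
      have h4 : psum β n = ∑ k, β k := psum_top β le_rfl
      omega
    -- the transferred sequence
    set β' : Fin n → ℕ := fun k =>
      if k = (⟨i, hin⟩ : Fin n) then β ⟨i, hin⟩ + 1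
      else if k = (⟨j, hjn⟩ : Fin n) then β ⟨j, hjn⟩ - 1 else β k
      with hβ'def
    have hβ'I : β' ⟨i, hin⟩ = β ⟨i, hin⟩ + 1 := by simp [hβ'def]
    have hβ'J : β' ⟨j, hjn⟩ = β ⟨j, hjn⟩ - 1 := by simp [hβ'def, hIJ.symm]
    have hoff : ∀ k, k ≠ (⟨i, hin⟩ : Fin n) → k ≠ (⟨j, hjn⟩ : Fin n) → β' k = β k := by
      intro k h1 h2
      simp [hβ'def, h1, h2]
    -- β' is weakly decreasing
    have hβ' : ∀ a b : Fin n, a ≤ b → β' b ≤ β' a := by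
      intro a b hab
      have haleb : a.val ≤ b.val := hab
      by_cases hbI : b = (⟨i, hin⟩ : Fin n)
      · have hbv : b.val = i := by rw [hbI]
        by_cases haI : a = (⟨i, hin⟩ : Fin n)
        · rw [hbI, haI]
        · have hav : a.val ≠ i := fun h => haI (Fin.ext (by simpa using h))
          have hai : a.val < i := by omega
          have haJ : a ≠ (⟨j, hjn⟩ : Fin n) := fun h => by
            have : a.val = j := by rw [h]
            omega
          rw [hbI, hoff a haI haJ, hβ'I]
          have h1 := hmin a.val a.isLt hai
          rw [Fin.eta] at h1
          have h2 : α ⟨i, hin⟩ ≤ α a := hα a ⟨i, hin⟩ (by simp [Fin.le_def]; omega)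
          omega
      · by_cases hbJ : b = (⟨j, hjn⟩ : Fin n)
        · rw [hbJ, hβ'J]
          by_cases haI : a = (⟨i, hin⟩ : Fin n)
          · rw [haI, hβ'I]
            have := hβ ⟨i, hin⟩ ⟨j, hjn⟩ (by simp [Fin.le_def]; omega)
            omega
          · by_cases haJ : a = (⟨j, hjn⟩ : Fin n)
            · rw [haJ, hβ'J]
            · rw [hoff a haI haJ]
              have := hβ a ⟨j, hjn⟩ (by rw [← hbJ]; exact hab)
              omega
        · rw [hoff b hbI hbJ]
          by_cases haI : a = (⟨i, hin⟩ : Fin n)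
          · rw [haI, hβ'I]
            have := hβ a b hab
            rw [haI] at this
            omega
          · by_cases haJ : a = (⟨j, hjn⟩ : Fin n)
            · rw [haJ, hβ'J]
              have hbv : b.val ≠ j := fun h => hbJ (Fin.ext (by simpa using h))
              have hav : a.val = j := by rw [haJ]
              have hbj : j < b.val := by omega
              rcases hjor with hj1 | ⟨hj2, hj3⟩
              · exfalso
                have := b.isLt
                omega
              · have := hβ ⟨j+1, hj2⟩ b (by simp [Fin.le_def]; omega)
                omega
            · rw [hoff a haI haJ]
              exact hβ a b hab
    -- sum of β' equals sum of α
    have hJmem : (⟨j, hjn⟩ : Fin n) ∈ univ.erase ⟨i, hin⟩ := by simp [hIJ.symm]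
    have hβ'd : ∑ k, β' k = ∑ k, α k := by
      have hd1 : ∑ k, β' k = β' ⟨i, hin⟩ +
          (β' ⟨j, hjn⟩ + ∑ k ∈ (univ.erase ⟨i, hin⟩).erase ⟨j, hjn⟩, β' k) := by
        rw [Finset.add_sum_erase _ β' hJmem, Finset.add_sum_erase _ β' (mem_univ _)]
      have hd2 : ∑ k, β k = β ⟨i, hin⟩ +
          (β ⟨j, hjn⟩ + ∑ k ∈ (univ.erase ⟨i, hin⟩).erase ⟨j, hjn⟩, β k) := by
        rw [Finset.add_sum_erase _ β hJmem, Finset.add_sum_erase _ β (mem_univ _)]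
      have hrest : ∑ k ∈ (univ.erase ⟨i, hin⟩).erase ⟨j, hjn⟩, β' k
          = ∑ k ∈ (univ.erase ⟨i, hin⟩).erase ⟨j, hjn⟩, β k := by
        apply Finset.sum_congr rfl
        intro k hk
        simp only [Finset.mem_erase] at hk
        exact hoff k hk.2.1 hk.1
      rw [hd1, hrest, hβ'I, hβ'J, ← hβd, hd2]
      omega
    -- psum formula for β'
    have hps : ∀ k, k ≤ n →
        psum β' k = if i < k ∧ k ≤ j then psum β k + 1 else psum β k := by
      intro k
      induction k with
      | zero =>
        intro _
        rw [psum_zero, psum_zero]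
        simp
      | succ k ihk =>
        intro hk1
        have hkn : k < n := by omega
        have hk := ihk (by omega)
        rw [psum_succ β' hkn, psum_succ β hkn, hk]
        by_cases hkI : (⟨k, hkn⟩ : Fin n) = ⟨i, hin⟩
        · have hki : k = i := by
            have := congrArg Fin.val hkI; simpa using this
          subst hki
          rw [hkI, hβ'I]
          rw [if_neg (by omega), if_pos (by omega)]
          omega
        · by_cases hkJ : (⟨k, hkn⟩ : Fin n) = ⟨j, hjn⟩
          · have hkj : k = j := by
              have := congrArg Fin.val hkJ; simpa using this
            subst hkj
            rw [hkJ, hβ'J]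
            rw [if_pos (by omega), if_neg (by omega)]
            have := hβj1
            omega
          · rw [hoff _ hkI hkJ]
            have hki : k ≠ i := fun h => hkI (Fin.ext (by simpa using h))
            have hkj : k ≠ j := fun h => hkJ (Fin.ext (by simpa using h))
            by_cases hw : i < k ∧ k ≤ j
            · rw [if_pos hw, if_pos (by omega)]
              omega
            · rw [if_neg hw, if_neg (by omega)]
    -- dominance for β'
    have hdom' : ∀ k, psum β' k ≤ psum α k := by
      intro k
      rcases le_or_gt k n with hk | hk
      · rw [hps k hk]
        by_cases hw : i < k ∧ k ≤ j
        · rw [if_pos hw]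
          exact claim k hw.1 hw.2
        · rw [if_neg hw]
          exact hdom k
      · rw [psum_top β' (by omega), psum_top α (by omega), hβ'd]
    -- measure strictly decreases
    have hM' : (∑ k ∈ range (n+1), (psum α k - psum β' k)) ≤ N := by
      have hlt : (∑ k ∈ range (n+1), (psum α k - psum β' k))
          < ∑ k ∈ range (n+1), (psum α k - psum β k) := by
        apply Finset.sum_lt_sum
        · intro k hk
          simp only [Finset.mem_range] at hk
          rw [hps k (by omega)]
          split <;> omega
        · refine ⟨i + 1, by simp; omega, ?_⟩
          rw [hps (i+1) (by omega), if_pos (by omega)]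
          have := claim (i+1) (by omega) (by omega)
          omega
      omega
    -- key two-variable inequality
    have key : ∀ X Y : ℝ, 0 ≤ X → 0 ≤ Y →
        X ^ β ⟨i, hin⟩ * Y ^ β ⟨j, hjn⟩ + Y ^ β ⟨i, hin⟩ * X ^ β ⟨j, hjn⟩ ≤
        X ^ β' ⟨i, hin⟩ * Y ^ β' ⟨j, hjn⟩ + Y ^ β' ⟨i, hin⟩ * X ^ β' ⟨j, hjn⟩ := by
      intro X Y hX hY
      have hJI : β ⟨j, hjn⟩ ≤ β ⟨i, hin⟩ :=
        hβ ⟨i, hin⟩ ⟨j, hjn⟩ (by simp [Fin.le_def]; omega)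
      obtain ⟨b, hb⟩ : ∃ b, β ⟨j, hjn⟩ = b + 1 := ⟨β ⟨j, hjn⟩ - 1, by omega⟩
      obtain ⟨p, hp⟩ : ∃ p, β ⟨i, hin⟩ = b + 1 + p := ⟨β ⟨i, hin⟩ - β ⟨j, hjn⟩, by omega⟩
      have h1 : β' ⟨i, hin⟩ = b + p + 2 := by rw [hβ'I]; omega
      have h2 : β' ⟨j, hjn⟩ = b := by rw [hβ'J]; omega
      rw [h1, h2, hp, hb]
      exact pow_pair hX hY b p
    calc ∑ σ : Equiv.Perm (Fin n), ∏ k, x (σ k) ^ β k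
        ≤ ∑ σ : Equiv.Perm (Fin n), ∏ k, x (σ k) ^ β' k :=
          transfer x hx ⟨i, hin⟩ ⟨j, hjn⟩ hIJ β β' hoff key
      _ ≤ ∑ σ : Equiv.Perm (Fin n), ∏ k, x (σ k) ^ α k :=
          ih β' hβ' hβ'd hdom' hM'

theorem muirhead (n d : ℕ) (α β : Fin n → ℕ)
    (hα : ∀ i j : Fin n, i ≤ j → α j ≤ α i) (hβ : ∀ i j : Fin n, i ≤ j → β j ≤ β i)
    (hαd : ∑ i, α i = d) (hβd : ∑ i, β i = d)
    (hdom : ∀ k : ℕ, ∑ i ∈ univ.filter (fun i : Fin n => (i : ℕ) < k), β i ≤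
      ∑ i ∈ univ.filter (fun i : Fin n => (i : ℕ) < k), α i)
    (x : Fin n → ℝ) (hx : ∀ i, 0 ≤ x i) :
    ((n.factorial : ℝ))⁻¹ * ∑ σ : Equiv.Perm (Fin n), ∏ j, x (σ j) ^ β j ≤
    ((n.factorial : ℝ))⁻¹ * ∑ σ : Equiv.Perm (Fin n), ∏ j, x (σ j) ^ α j := by
  have h := muirhead_aux α hα x hx (∑ k ∈ range (n+1), (psum α k - psum β k)) β hβ
    (by rw [hβd, hαd]) (fun k => hdom k) le_rfl
  exact mul_le_mul_of_nonneg_left h (by positivity)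
end

section
/- Let α, β be partitions of d into at most n parts with α ⊵ β in dominance order. Then the polynomial [α] − [β] lies in the semiring S, i.e., ([α] − [β])(x₁²,…,xₙ²) is a sum of squares of polynomials (Muirhead's inequality as a sum of squares). -/
open Finset MvPolynomial

/-- The normalized monomial symmetric polynomial `[α]`. -/
noncomputable def msym (n : ℕ) (α : Fin n → ℕ) : MvPolynomial (Fin n) ℝ :=
  ((n.factorial : ℝ))⁻¹ • ∑ σ : Equiv.Perm (Fin n), ∏ j, X (σ j) ^ α j

noncomputable def Tpoly (n : ℕ) (δ : Fin n → ℕ) : MvPolynomial (Fin n) ℝ :=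
  ∑ σ : Equiv.Perm (Fin n), ∏ k, X (σ k) ^ (2 * δ k)


lemma my_isSumSq_sum {R : Type*} [AddCommMonoid R] [Mul R] {ι : Type*} (s : Finset ι)
    (f : ι → R) (h : ∀ i ∈ s, IsSumSq (f i)) : IsSumSq (∑ i ∈ s, f i) := by
  induction s using Finset.cons_induction with
  | empty => simpa using IsSumSq.zero
  | cons i s his ih =>
      rw [Finset.sum_cons]
      exact (h i (Finset.mem_cons_self _ _)).add (ih fun j hj => h j (Finset.mem_cons.2 (Or.inr hj)))

lemma my_mul_sq_isSumSq {R : Type*} [CommRing R] {p : R} (q : R) (h : IsSumSq p) :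
    IsSumSq (q * q * p) := by
  induction h with
  | zero => simpa using IsSumSq.zero
  | @sq_add a S pS ih =>
      have : q * q * (a * a + S) = (q * a) * (q * a) + q * q * S := by ring
      rw [this]; exact IsSumSq.sq_add _ ih

lemma my_smul_isSumSq {n : ℕ} {r : ℝ} (hr : 0 ≤ r) {p : MvPolynomial (Fin n) ℝ}
    (h : IsSumSq p) : IsSumSq (r • p) := by
  have : r • p = C (Real.sqrt r) * C (Real.sqrt r) * p := by
    rw [smul_eq_C_mul, ← map_mul, Real.mul_self_sqrt hr]
  rw [this]; exact my_mul_sq_isSumSq _ h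

lemma my_sq_isSumSq {R : Type*} [AddCommMonoid R] [Monoid R] (q : R) : IsSumSq (q ^ 2) := by
  have := IsSumSq.sq_add q IsSumSq.zero
  simpa [sq] using this

lemma key_ring {A : Type*} [CommRing A] (x y R : A) (b c : ℕ) :
    ∑ s ∈ Finset.range c, ((x ^ 2 - y ^ 2) * (x ^ (b + s) * y ^ (b + (c - 1 - s))) * R) ^ 2
      = (x ^ (2 * (b + 1 + c)) * y ^ (2 * b) + x ^ (2 * b) * y ^ (2 * (b + 1 + c))
         - x ^ (2 * (b + c)) * y ^ (2 * (b + 1)) - x ^ (2 * (b + 1)) * y ^ (2 * (b + c))) * R ^ 2 := by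
  have h1 : ∀ s ∈ Finset.range c,
      ((x ^ 2 - y ^ 2) * (x ^ (b + s) * y ^ (b + (c - 1 - s))) * R) ^ 2
        = ((x ^ 2 - y ^ 2) ^ 2 * (x ^ (2 * b) * y ^ (2 * b)) * R ^ 2)
            * ((x ^ 2) ^ s * (y ^ 2) ^ (c - 1 - s)) := by
    intro s hs
    generalize c - 1 - s = t
    ring
  rw [Finset.sum_congr rfl h1, ← Finset.mul_sum]
  have h3 : (x ^ 2 - y ^ 2) ^ 2 * (x ^ (2 * b) * y ^ (2 * b)) * R ^ 2
        * (∑ s ∈ Finset.range c, (x ^ 2) ^ s * (y ^ 2) ^ (c - 1 - s))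
      = (x ^ 2 - y ^ 2) * (x ^ (2 * b) * y ^ (2 * b)) * R ^ 2
        * ((∑ s ∈ Finset.range c, (x ^ 2) ^ s * (y ^ 2) ^ (c - 1 - s)) * (x ^ 2 - y ^ 2)) := by
    ring
  rw [h3, geom_sum₂_mul]
  ring
lemma bind_msym (n : ℕ) (δ : Fin n → ℕ) :
    bind₁ (fun i : Fin n => (X i : MvPolynomial (Fin n) ℝ) ^ 2) (msym n δ)
      = ((n.factorial : ℝ))⁻¹ • Tpoly n δ := by
  unfold msym Tpoly
  rw [map_smul]
  congr 1
  rw [map_sum]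
  refine Finset.sum_congr rfl fun σ _ => ?_
  rw [map_prod]
  refine Finset.prod_congr rfl fun k _ => ?_
  rw [map_pow, bind₁_X_right, ← pow_mul, mul_comm]

lemma prod_extract (n : ℕ) (e : Fin n → ℕ) {i j : Fin n} (hij : i ≠ j) (σ : Equiv.Perm (Fin n)) :
    ∏ k, (X (σ k) : MvPolynomial (Fin n) ℝ) ^ (2 * e k)
      = X (σ i) ^ (2 * e i) * X (σ j) ^ (2 * e j) *
          (∏ k ∈ (univ.erase i).erase j, X (σ k) ^ e k) ^ 2 := by
  rw [← Finset.mul_prod_erase univ _ (mem_univ i),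
    ← Finset.mul_prod_erase (univ.erase i) _ (Finset.mem_erase.2 ⟨hij.symm, mem_univ j⟩),
    ← mul_assoc]
  congr 1
  rw [← Finset.prod_pow]
  refine Finset.prod_congr ?_ fun k hk => by rw [pow_mul']
  rw [Finset.erase_right_comm]
lemma step_sos (n : ℕ) {i j : Fin n} (hij : i ≠ j) (δ : Fin n → ℕ) (hlt : δ j < δ i) :
    IsSumSq (bind₁ (fun i : Fin n => (X i : MvPolynomial (Fin n) ℝ) ^ 2)
      (msym n δ - msym n (fun k => if k = i then δ i - 1 else if k = j then δ j + 1 else δ k))) := by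
  set δ' : Fin n → ℕ := fun k => if k = i then δ i - 1 else if k = j then δ j + 1 else δ k with hδ'
  obtain ⟨c, hc⟩ : ∃ c, δ i = δ j + 1 + c := ⟨δ i - δ j - 1, by omega⟩
  set b := δ j with hb
  -- Q σ s
  set Q : Equiv.Perm (Fin n) → ℕ → MvPolynomial (Fin n) ℝ := fun σ s =>
    (X (σ i) ^ 2 - X (σ j) ^ 2) * (X (σ i) ^ (b + s) * X (σ j) ^ (b + (c - 1 - s)))
      * (∏ k ∈ (univ.erase i).erase j, X (σ k) ^ δ k) with hQ
  set SS : MvPolynomial (Fin n) ℝ := ∑ σ : Equiv.Perm (Fin n), ∑ s ∈ Finset.range c, Q σ s ^ 2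
    with hSS
  have hδ'i : δ' i = b + c := by simp [hδ']; omega
  have hδ'j : δ' j = b + 1 := by simp [hδ', hij.symm]
  have hδ'k : ∀ k, k ≠ i → k ≠ j → δ' k = δ k := by intro k h1 h2; simp [hδ', h1, h2]
  -- per sigma identity
  have per : ∀ σ : Equiv.Perm (Fin n),
      (∏ k, (X (σ k) : MvPolynomial (Fin n) ℝ) ^ (2 * δ k)
        - ∏ k, X (σ k) ^ (2 * δ' k))
      + (∏ k, (X ((σ * Equiv.swap i j) k) : MvPolynomial (Fin n) ℝ) ^ (2 * δ k)
        - ∏ k, X ((σ * Equiv.swap i j) k) ^ (2 * δ' k))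
      = ∑ s ∈ Finset.range c, Q σ s ^ 2 := by
    intro σ
    have hswap : ∀ e : Fin n → ℕ,
        ∏ k, (X ((σ * Equiv.swap i j) k) : MvPolynomial (Fin n) ℝ) ^ (2 * e k)
          = X (σ j) ^ (2 * e i) * X (σ i) ^ (2 * e j) *
            (∏ k ∈ (univ.erase i).erase j, X (σ k) ^ e k) ^ 2 := by
      intro e
      rw [prod_extract n e hij (σ * Equiv.swap i j)]
      have h1 : (σ * Equiv.swap i j) i = σ j := by simp [Equiv.Perm.mul_apply]
      have h2 : (σ * Equiv.swap i j) j = σ i := by simp [Equiv.Perm.mul_apply]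
      rw [h1, h2]
      congr 2
      refine Finset.prod_congr rfl fun k hk => ?_
      have hkj := (Finset.mem_erase.1 hk).1
      have hki := (Finset.mem_erase.1 (Finset.mem_erase.1 hk).2).1
      rw [Equiv.Perm.mul_apply, Equiv.swap_apply_of_ne_of_ne hki hkj]
    rw [prod_extract n δ hij σ, prod_extract n δ' hij σ, hswap δ, hswap δ']
    have hE : ∏ k ∈ (univ.erase i).erase j, (X (σ k) : MvPolynomial (Fin n) ℝ) ^ δ' k
        = ∏ k ∈ (univ.erase i).erase j, X (σ k) ^ δ k := by
      refine Finset.prod_congr rfl fun k hk => ?_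
      have hkj := (Finset.mem_erase.1 hk).1
      have hki := (Finset.mem_erase.1 (Finset.mem_erase.1 hk).2).1
      rw [hδ'k k hki hkj]
    rw [hE, hQ, key_ring (X (σ i)) (X (σ j)) (∏ k ∈ (univ.erase i).erase j, X (σ k) ^ δ k) b c,
      hδ'i, hδ'j, hc, hb]
    ring
  have h2 : (2 : ℝ) • (Tpoly n δ - Tpoly n δ') = SS := by
    have hre : ∀ e : Fin n → ℕ,
        ∑ σ : Equiv.Perm (Fin n), ∏ k, (X ((σ * Equiv.swap i j) k) : MvPolynomial (Fin n) ℝ) ^ (2 * e k)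
          = ∑ σ : Equiv.Perm (Fin n), ∏ k, X (σ k) ^ (2 * e k) := by
      intro e
      exact Equiv.sum_comp (Equiv.mulRight (Equiv.swap i j))
        (fun σ => ∏ k, (X (σ k) : MvPolynomial (Fin n) ℝ) ^ (2 * e k))
    rw [hSS, ← Finset.sum_congr rfl fun σ _ => per σ]
    unfold Tpoly
    rw [Finset.sum_add_distrib, Finset.sum_sub_distrib, Finset.sum_sub_distrib, hre δ, hre δ']
    rw [two_smul]
  have key : bind₁ (fun i : Fin n => (X i : MvPolynomial (Fin n) ℝ) ^ 2) (msym n δ - msym n δ')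
      = (((n.factorial : ℝ))⁻¹ * (2 : ℝ)⁻¹) • SS := by
    rw [map_sub, bind_msym, bind_msym, ← smul_sub]
    have : Tpoly n δ - Tpoly n δ' = (2 : ℝ)⁻¹ • SS := by
      rw [← h2, smul_smul]; norm_num
    rw [this, smul_smul]
  rw [key]
  refine my_smul_isSumSq (by positivity) ?_
  exact my_isSumSq_sum _ _ fun σ _ => my_isSumSq_sum _ _ fun s _ => my_sq_isSumSq _
lemma chain_sos : ∀ (m n : ℕ) (α β : Fin n → ℕ),
    (∑ k, ((α k - β k) + (β k - α k))) = m →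
    (∀ i j : Fin n, i ≤ j → β j ≤ β i) →
    (∑ k, α k = ∑ k, β k) →
    (∀ k : ℕ, ∑ l ∈ univ.filter (fun l : Fin n => (l : ℕ) < k), β l ≤
      ∑ l ∈ univ.filter (fun l : Fin n => (l : ℕ) < k), α l) →
    IsSumSq (bind₁ (fun i : Fin n => (X i : MvPolynomial (Fin n) ℝ) ^ 2)
      (msym n α - msym n β)) := by
  intro m
  induction m using Nat.strong_induction_on with
  | _ m IH =>
    intro n α β hm hβ hsum hdom
    by_cases hab : α = β
    · subst hab
      simp only [sub_self, map_zero]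
      exact IsSumSq.zero
    · -- find i : minimal index where α ≠ β
      have hAne : (univ.filter (fun k : Fin n => α k ≠ β k)).Nonempty := by
        rcases Function.ne_iff.1 hab with ⟨k, hk⟩
        exact ⟨k, by simpa using hk⟩
      set i := (univ.filter (fun k : Fin n => α k ≠ β k)).min' hAne with hi
      have hiMem : α i ≠ β i := by
        have := Finset.min'_mem _ hAne
        simpa using this
      have hiMin : ∀ l : Fin n, l < i → α l = β l := by
        intro l hl
        by_contra hne
        exact absurd (Finset.min'_le _ l (by simpa using hne)) (not_le.2 hl)
      -- α i > β i using dominance at (i:ℕ)+1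
      have hgt : β i < α i := by
        have hd := hdom ((i : ℕ) + 1)
        have hiin : i ∈ univ.filter (fun l : Fin n => (l : ℕ) < (i : ℕ) + 1) := by
          simp
        rw [← Finset.add_sum_erase _ β hiin, ← Finset.add_sum_erase _ α hiin] at hd
        have heq : ∑ l ∈ (univ.filter (fun l : Fin n => (l : ℕ) < (i : ℕ) + 1)).erase i, β l
            = ∑ l ∈ (univ.filter (fun l : Fin n => (l : ℕ) < (i : ℕ) + 1)).erase i, α l := by
          refine Finset.sum_congr rfl fun l hl => ?_
          have hlne := (Finset.mem_erase.1 hl).1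
          have hlval : (l : ℕ) < (i : ℕ) + 1 := by
            have := (Finset.mem_erase.1 hl).2; simpa using this
          have : l < i := by
            rcases lt_or_eq_of_le (Nat.lt_succ_iff.1 hlval) with h | h
            · exact h
            · exact absurd (Fin.ext h) hlne
          exact (hiMin l this).symm
        rw [heq] at hd
        omega
      -- find j : minimal index where α < β
      have hBne : (univ.filter (fun k : Fin n => α k < β k)).Nonempty := by
        by_contra hB
        rw [Finset.not_nonempty_iff_eq_empty] at hB
        have hle : ∀ k : Fin n, k ∈ univ → β k ≤ α k := by
          intro k _
          by_contra hk
          have : k ∈ univ.filter (fun k : Fin n => α k < β k) := by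
            simp [not_le.1 hk]
          simp [hB] at this
        have : ∑ k, β k < ∑ k, α k :=
          Finset.sum_lt_sum hle ⟨i, mem_univ i, hgt⟩
        omega
      set j := (univ.filter (fun k : Fin n => α k < β k)).min' hBne with hj
      have hjMem : α j < β j := by
        have := Finset.min'_mem _ hBne
        simpa using this
      have hjMin : ∀ l : Fin n, l < j → β l ≤ α l := by
        intro l hl
        by_contra hne
        exact absurd (Finset.min'_le _ l (by simpa using not_le.1 hne)) (not_le.2 hl)
      have hij : i < j := by
        rcases lt_trichotomy i j with h | h | h
        · exact h
        · exfalso; rw [h] at hgt; omega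
        · have := hiMin j h; omega
      have hijne : i ≠ j := ne_of_lt hij
      -- α i > α j
      have hlt : α j < α i := by
        have : β j ≤ β i := hβ i j (le_of_lt hij)
        omega
      set α' : Fin n → ℕ := fun k => if k = i then α i - 1 else if k = j then α j + 1 else α k
        with hα'
      have hα'i : α' i = α i - 1 := by simp [hα']
      have hα'j : α' j = α j + 1 := by simp [hα', hijne.symm]
      have hα'k : ∀ k, k ≠ i → k ≠ j → α' k = α k := by intro k h1 h2; simp [hα', h1, h2]
      -- measure decreases
      have hmeas : (∑ k, ((α' k - β k) + (β k - α' k))) < m := by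
        rw [← hm]
        refine Finset.sum_lt_sum (fun k _ => ?_) ⟨i, mem_univ i, ?_⟩
        · rcases eq_or_ne k i with rfl | h1
          · rw [hα'i]; omega
          rcases eq_or_ne k j with rfl | h2
          · rw [hα'j]; omega
          · rw [hα'k k h1 h2]
        · rw [hα'i]; omega
      -- sum preserved
      have hsum' : ∑ k, α' k = ∑ k, β k := by
        rw [← hsum]
        have hji : j ∈ (univ : Finset (Fin n)).erase i := by
          simp [hijne.symm]
        rw [← Finset.add_sum_erase _ α' (mem_univ i), ← Finset.add_sum_erase _ α (mem_univ i),
          ← Finset.add_sum_erase _ α' hji, ← Finset.add_sum_erase _ α hji]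
        have heq : ∑ l ∈ ((univ : Finset (Fin n)).erase i).erase j, α' l
            = ∑ l ∈ ((univ : Finset (Fin n)).erase i).erase j, α l := by
          refine Finset.sum_congr rfl fun l hl => ?_
          exact hα'k l (Finset.mem_erase.1 (Finset.mem_erase.1 hl).2).1 (Finset.mem_erase.1 hl).1
        rw [heq, hα'i, hα'j]
        omega
      -- dominance preserved
      have hdom' : ∀ k : ℕ, ∑ l ∈ univ.filter (fun l : Fin n => (l : ℕ) < k), β l ≤
          ∑ l ∈ univ.filter (fun l : Fin n => (l : ℕ) < k), α' l := by
        intro k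
        set s := univ.filter (fun l : Fin n => (l : ℕ) < k) with hs
        have hmem : ∀ l : Fin n, l ∈ s ↔ (l : ℕ) < k := by intro l; simp [hs]
        by_cases hik : (i : ℕ) < k
        · by_cases hjk : (j : ℕ) < k
          · -- both in s : sums equal
            have hjs : j ∈ s.erase i := Finset.mem_erase.2 ⟨hijne.symm, (hmem j).2 hjk⟩
            have his : i ∈ s := (hmem i).2 hik
            have key : ∑ l ∈ s, α' l = ∑ l ∈ s, α l := by
              rw [← Finset.add_sum_erase _ α' his, ← Finset.add_sum_erase _ α his,
                ← Finset.add_sum_erase _ α' hjs, ← Finset.add_sum_erase _ α hjs]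
              have heq : ∑ l ∈ (s.erase i).erase j, α' l = ∑ l ∈ (s.erase i).erase j, α l :=
                Finset.sum_congr rfl fun l hl =>
                  hα'k l (Finset.mem_erase.1 (Finset.mem_erase.1 hl).2).1
                    (Finset.mem_erase.1 hl).1
              rw [heq, hα'i, hα'j]
              omega
            rw [key]; exact hdom k
          · -- i ∈ s, j ∉ s : strict dominance for α
            have his : i ∈ s := (hmem i).2 hik
            have hkey : ∑ l ∈ s, α' l + 1 = ∑ l ∈ s, α l := by
              rw [← Finset.add_sum_erase _ α' his, ← Finset.add_sum_erase _ α his]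
              have heq : ∑ l ∈ s.erase i, α' l = ∑ l ∈ s.erase i, α l := by
                refine Finset.sum_congr rfl fun l hl => ?_
                have h1 := (Finset.mem_erase.1 hl).1
                have h2 : l ≠ j := by
                  intro h
                  have hv : (l : ℕ) = (j : ℕ) := by rw [h]
                  have hlk := (hmem l).1 (Finset.mem_erase.1 hl).2
                  omega
                exact hα'k l h1 h2
              rw [heq, hα'i]
              omega
            have hstrict : ∑ l ∈ s, β l < ∑ l ∈ s, α l := by
              refine Finset.sum_lt_sum (fun l hl => ?_) ⟨i, his, hgt⟩
              have hlk := (hmem l).1 hl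
              have hlj : l < j := by
                rcases lt_or_ge l j with h | h
                · exact h
                · exfalso; exact hjk (lt_of_le_of_lt (by exact_mod_cast h) hlk)
              exact hjMin l hlj
            omega
        · -- i ∉ s (hence j ∉ s) : α' = α on s
          have key : ∑ l ∈ s, α' l = ∑ l ∈ s, α l := by
            refine Finset.sum_congr rfl fun l hl => ?_
            have hlk := (hmem l).1 hl
            have h1 : l ≠ i := by
              intro h
              have hv : (l : ℕ) = (i : ℕ) := by rw [h]
              omega
            have h2 : l ≠ j := by
              intro h
              have hv : (l : ℕ) = (j : ℕ) := by rw [h]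
              have hij' : (i : ℕ) < (j : ℕ) := hij
              omega
            exact hα'k l h1 h2
          rw [key]; exact hdom k
      -- conclude
      have hsplit : msym n α - msym n β = (msym n α - msym n α') + (msym n α' - msym n β) := by
        ring
      rw [hsplit, map_add]
      exact (step_sos n hijne α hlt).add
        (IH _ hmeas n α' β rfl hβ hsum' hdom')

theorem muirhead_sos (n d : ℕ) (α β : Fin n → ℕ)
    (hα : ∀ i j : Fin n, i ≤ j → α j ≤ α i) (hβ : ∀ i j : Fin n, i ≤ j → β j ≤ β i)
    (hαd : ∑ i, α i = d) (hβd : ∑ i, β i = d)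
    (hdom : ∀ k : ℕ, ∑ i ∈ univ.filter (fun i : Fin n => (i : ℕ) < k), β i ≤
      ∑ i ∈ univ.filter (fun i : Fin n => (i : ℕ) < k), α i) :
    IsSumSq (bind₁ (fun i : Fin n => (X i : MvPolynomial (Fin n) ℝ) ^ 2)
      (msym n α - msym n β)) := by
  exact chain_sos _ n α β rfl hβ (by omega) hdom
end

section
/- For all nonnegative reals x₁,…,xₙ and 1 ≤ i ≤ k, one has P_{i−1}(x)·P_{k+1}(x) ≥ P_i(x)·P_k(x), where P_m = (1/n) Σ_j x_j^m. -/
open Finset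

lemma psum_key (i k : ℕ) (hi : 1 ≤ i) (hik : i ≤ k) (a b : ℝ)
    (ha : 0 ≤ a) (hb : 0 ≤ b) :
    a ^ i * b ^ k + b ^ i * a ^ k ≤ a ^ (i - 1) * b ^ (k + 1) + b ^ (i - 1) * a ^ (k + 1) := by
  obtain ⟨i', rfl⟩ : ∃ i', i = i' + 1 := ⟨i - 1, (Nat.succ_pred_eq_of_pos hi).symm⟩
  obtain ⟨d, rfl⟩ : ∃ d, k = i' + 1 + d := ⟨k - (i' + 1), (Nat.add_sub_cancel' hik).symm⟩
  simp only [Nat.add_sub_cancel]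
  have hfac : (0:ℝ) ≤ (a - b) * (a ^ (d + 1) - b ^ (d + 1)) := by
    rcases le_total a b with h | h
    · have := pow_le_pow_left₀ ha h (d + 1)
      nlinarith
    · have := pow_le_pow_left₀ hb h (d + 1)
      nlinarith
  have hin : a * b ^ (d + 1) + b * a ^ (d + 1) ≤ b ^ (d + 1 + 1) + a ^ (d + 1 + 1) := by
    have e1 : a ^ (d+1+1) = a * a ^ (d+1) := by ring
    have e2 : b ^ (d+1+1) = b * b ^ (d+1) := by ring
    nlinarith [hfac, e1, e2]
  calc a ^ (i' + 1) * b ^ (i' + 1 + d) + b ^ (i' + 1) * a ^ (i' + 1 + d)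
      = a ^ i' * b ^ i' * (a * b ^ (d + 1) + b * a ^ (d + 1)) := by ring
    _ ≤ a ^ i' * b ^ i' * (b ^ (d + 1 + 1) + a ^ (d + 1 + 1)) := by
        exact mul_le_mul_of_nonneg_left hin (by positivity)
    _ = a ^ i' * b ^ (i' + 1 + d + 1) + b ^ i' * a ^ (i' + 1 + d + 1) := by ring

theorem psum_products_monotone (n i k : ℕ) (hi : 1 ≤ i) (hik : i ≤ k)
    (x : Fin n → ℝ) (hx : ∀ j, 0 ≤ x j) :
    ((n : ℝ))⁻¹ * (∑ j, x j ^ i) * (((n : ℝ))⁻¹ * ∑ j, x j ^ k) ≤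
    ((n : ℝ))⁻¹ * (∑ j, x j ^ (i - 1)) * (((n : ℝ))⁻¹ * ∑ j, x j ^ (k + 1)) := by
  have H : (∑ j, x j ^ i) * (∑ j, x j ^ k) ≤
      (∑ j, x j ^ (i - 1)) * (∑ j, x j ^ (k + 1)) := by
    have h2 : 2 * ((∑ j, x j ^ i) * (∑ j, x j ^ k)) ≤
        2 * ((∑ j, x j ^ (i - 1)) * (∑ j, x j ^ (k + 1))) := by
      have e : ∀ s t : ℕ, 2 * ((∑ j, x j ^ s) * (∑ j, x j ^ t)) =
          ∑ p, ∑ q, (x p ^ s * x q ^ t + x q ^ s * x p ^ t) := by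
        intro s t
        rw [Finset.sum_mul_sum, two_mul]
        nth_rewrite 2 [Finset.sum_comm]
        rw [← Finset.sum_add_distrib]
        refine Finset.sum_congr rfl fun p _ => ?_
        rw [← Finset.sum_add_distrib]
      rw [e, e]
      apply Finset.sum_le_sum
      intro p _
      apply Finset.sum_le_sum
      intro q _
      exact psum_key i k hi hik (x p) (x q) (hx p) (hx q)
    linarith
  have e1 : ((n : ℝ))⁻¹ * (∑ j, x j ^ i) * (((n : ℝ))⁻¹ * ∑ j, x j ^ k) =
      ((n : ℝ))⁻¹ * ((n : ℝ))⁻¹ * ((∑ j, x j ^ i) * (∑ j, x j ^ k)) := by ring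
  have e2 : ((n : ℝ))⁻¹ * (∑ j, x j ^ (i - 1)) * (((n : ℝ))⁻¹ * ∑ j, x j ^ (k + 1)) =
      ((n : ℝ))⁻¹ * ((n : ℝ))⁻¹ * ((∑ j, x j ^ (i - 1)) * (∑ j, x j ^ (k + 1))) := by ring
  rw [e1, e2]
  exact mul_le_mul_of_nonneg_left H (by positivity)
end

section
/- For all nonnegative reals x₁,…,xₙ and 1 ≤ i ≤ k ≤ n−1, one has E_i(x)·E_k(x) ≥ E_{i−1}(x)·E_{k+1}(x), where E_m is the normalized m-th elementary symmetric function (generalized Newton inequality). -/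
open Finset

/-- The normalized `m`-th elementary symmetric function of `x`. -/
noncomputable def E (n : ℕ) (m : ℕ) (x : Fin n → ℝ) : ℝ :=
  ((n.choose m : ℝ))⁻¹ * ∑ s ∈ powersetCard m (univ : Finset (Fin n)), ∏ i ∈ s, x i

lemma esymm_split (m j : ℕ) (x : Fin (m+1) → ℝ) :
    ∑ s ∈ powersetCard (j+1) (univ : Finset (Fin (m+1))), ∏ i ∈ s, x i
    = (∑ s ∈ powersetCard (j+1) (univ : Finset (Fin m)), ∏ i ∈ s, x (Fin.castSucc i))
      + x (Fin.last m) * ∑ s ∈ powersetCard j (univ : Finset (Fin m)), ∏ i ∈ s, x (Fin.castSucc i) := by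
  have hnot : Fin.last m ∉ (univ : Finset (Fin m)).map Fin.castSuccEmb := by
    simp [Fin.castSuccEmb]
    intro a
    exact (Fin.castSucc_lt_last a).ne
  have huniv : (univ : Finset (Fin (m+1)))
      = insert (Fin.last m) ((univ : Finset (Fin m)).map Fin.castSuccEmb) := by
    rw [Fin.univ_castSuccEmb]; rw [cons_eq_insert]
  rw [huniv, powersetCard_succ_insert hnot]
  rw [sum_union]
  · congr 1
    · rw [powersetCard_map, sum_map]
      apply sum_congr rfl
      intro s hs
      rw [RelEmbedding.coe_toEmbedding, mapEmbedding_apply, prod_map]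
      rfl
    · rw [sum_image]
      · rw [mul_sum]
        rw [powersetCard_map, sum_map]
        apply sum_congr rfl
        intro s hs
        rw [RelEmbedding.coe_toEmbedding, mapEmbedding_apply, prod_insert, prod_map]
        rfl
        · intro h
          obtain ⟨a, -, ha⟩ := mem_map.1 h
          have h1 := congrArg Fin.val ha
          have h2 := a.isLt
          simp [Fin.castSuccEmb] at h1
          omega
      · intro a ha b hb hab
        have hla : Fin.last m ∉ a := fun h => hnot ((mem_powersetCard.1 ha).1 h)
        have hlb : Fin.last m ∉ b := fun h => hnot ((mem_powersetCard.1 hb).1 h)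
        have := congrArg (fun s => erase s (Fin.last m)) hab
        simpa [erase_insert, hla, hlb] using this
  · rw [disjoint_left]
    intro s hs hs'
    have hls : Fin.last m ∉ s := fun h => hnot ((mem_powersetCard.1 hs).1 h)
    obtain ⟨a, ha, rfl⟩ := mem_image.1 hs'
    exact hls (mem_insert_self _ _)

lemma E_nonneg (n m : ℕ) (x : Fin n → ℝ) (hx : ∀ j, 0 ≤ x j) : 0 ≤ E n m x := by
  apply mul_nonneg
  · positivity
  · exact Finset.sum_nonneg fun s _ => Finset.prod_nonneg fun i _ => hx i

lemma E_zero (n : ℕ) (x : Fin n → ℝ) : E n 0 x = 1 := by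
  simp [E]

lemma E_rec (m j : ℕ) (hj : j ≤ m + 1) (x : Fin (m+1) → ℝ) :
    ((m+1 : ℕ) : ℝ) * E (m+1) j x
      = ((m + 1 - j : ℕ) : ℝ) * E m j (fun a => x (Fin.castSucc a))
        + (j : ℝ) * x (Fin.last m) * E m (j-1) (fun a => x (Fin.castSucc a)) := by
  cases j with
  | zero => simp [E_zero]
  | succ j =>
    have hjm : j + 1 ≤ m + 1 := hj
    unfold E
    rw [esymm_split]
    rcases Nat.lt_or_ge j m with hlt | hge
    · -- j + 1 ≤ m
      set S1 := ∑ s ∈ powersetCard (j+1) (univ : Finset (Fin m)), ∏ i ∈ s, x (Fin.castSucc i) with hS1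
      set S0 := ∑ s ∈ powersetCard j (univ : Finset (Fin m)), ∏ i ∈ s, x (Fin.castSucc i) with hS0
      have h1 : ((m:ℝ)+1) * (m.choose j : ℝ) = ((m+1).choose (j+1) : ℝ) * ((j:ℝ)+1) := by
        exact_mod_cast congrArg (Nat.cast (R := ℝ)) (Nat.add_one_mul_choose_eq m j)
      have h2 : ((m.choose (j+1) : ℕ):ℝ) * ((m:ℝ)+1)
          = ((m+1).choose (j+1) : ℝ) * ((m + 1 - (j+1) : ℕ):ℝ) := by
        exact_mod_cast congrArg (Nat.cast (R := ℝ)) (Nat.choose_mul_succ_eq m (j+1))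
      have hc : ((m+1).choose (j+1) : ℝ) ≠ 0 := by
        exact_mod_cast (Nat.choose_pos hjm).ne'
      have ha : ((m.choose (j+1)) : ℝ) ≠ 0 := by
        exact_mod_cast (Nat.choose_pos hlt).ne'
      have hb : ((m.choose j) : ℝ) ≠ 0 := by
        exact_mod_cast (Nat.choose_pos hlt.le).ne'
      have e1 : ((m:ℝ)+1) / (((m+1).choose (j+1) : ℝ))
          = ((m + 1 - (j+1) : ℕ):ℝ) / ((m.choose (j+1) : ℝ)) := by
        rw [div_eq_div_iff hc ha]
        linear_combination h2
      have e2 : ((m:ℝ)+1) / (((m+1).choose (j+1) : ℝ))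
          = ((j:ℝ)+1) / ((m.choose j : ℝ)) := by
        rw [div_eq_div_iff hc hb]
        linear_combination h1
      have hsub : (j + 1 - 1 : ℕ) = j := rfl
      rw [hsub]
      push_cast at e1 e2 ⊢
      linear_combination S1 * e1 + (x (Fin.last m) * S0) * e2
    · -- j = m
      have hjm' : j = m := le_antisymm (by omega) hge
      subst hjm'
      have hempty : powersetCard (j+1) (univ : Finset (Fin j)) = ∅ := by
        rw [Finset.powersetCard_eq_empty]
        simp
      rw [hempty]
      simp [Nat.choose_self]
      ring

set_option maxHeartbeats 1000000 in
lemma main_ind (n : ℕ) : ∀ (i k : ℕ), 1 ≤ i → i ≤ k → k + 1 ≤ n → ∀ (x : Fin n → ℝ),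
    (∀ j, 0 ≤ x j) → E n (i-1) x * E n (k+1) x ≤ E n i x * E n k x := by
  induction n with
  | zero => intro i k hi hik hk; exact (by omega : False).elim
  | succ m IH =>
    intro i k hi hik hk x hx
    set y : Fin m → ℝ := fun a => x (Fin.castSucc a) with hy
    have hy0 : ∀ a, 0 ≤ y a := fun a => hx _
    set t := x (Fin.last m) with htdef
    have ht : 0 ≤ t := hx _
    have hA : ∀ j, 0 ≤ E m j y := fun j => E_nonneg m j y hy0
    have hkm : k ≤ m := by omega
    -- recurrence equations
    have hri : ((m+1:ℕ):ℝ) * E (m+1) i x = ((m:ℝ)+1-i) * E m i y + (i:ℝ) * t * E m (i-1) y := by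
      have h := E_rec m i (by omega) x
      rw [← hy, ← htdef] at h
      rw [Nat.cast_sub (by omega : i ≤ m+1)] at h
      push_cast at h ⊢
      linear_combination h
    have hrk : ((m+1:ℕ):ℝ) * E (m+1) k x = ((m:ℝ)+1-k) * E m k y + (k:ℝ) * t * E m (k-1) y := by
      have h := E_rec m k (by omega) x
      rw [← hy, ← htdef] at h
      rw [Nat.cast_sub (by omega : k ≤ m+1)] at h
      push_cast at h ⊢
      linear_combination h
    have hri1 : ((m+1:ℕ):ℝ) * E (m+1) (i-1) x
        = ((m:ℝ)+1-((i:ℝ)-1)) * E m (i-1) y + ((i:ℝ)-1) * t * E m (i-1-1) y := by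
      have h := E_rec m (i-1) (by omega) x
      rw [← hy, ← htdef] at h
      rw [Nat.cast_sub (by omega : i - 1 ≤ m+1), Nat.cast_sub hi] at h
      push_cast at h ⊢
      linear_combination h
    have hrk1 : ((m+1:ℕ):ℝ) * E (m+1) (k+1) x
        = ((m:ℝ)-k) * E m (k+1) y + ((k:ℝ)+1) * t * E m k y := by
      have h := E_rec m (k+1) (by omega) x
      rw [← hy, ← htdef] at h
      rw [Nat.cast_sub (by omega : k + 1 ≤ m+1)] at h
      rw [show k + 1 - 1 = k from rfl] at h
      push_cast at h ⊢
      linear_combination h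
    -- cast facts
    have hi' : (1:ℝ) ≤ (i:ℝ) := by exact_mod_cast hi
    have hik' : (i:ℝ) ≤ (k:ℝ) := by exact_mod_cast hik
    have hkm' : (k:ℝ) ≤ (m:ℝ) := by exact_mod_cast hkm
    -- IH instances
    have hbc' : E m (i-1) y * E m k y ≤ E m i y * E m (k-1) y := by
      rcases eq_or_lt_of_le hik with heq | hlt
      · subst heq
        exact le_of_eq (mul_comm _ _)
      · have h := IH i (k-1) hi (by omega) (by omega) y hy0
        have hkk : k - 1 + 1 = k := by omega
        rwa [hkk] at h
    have hd : ((m:ℝ)-k) * (E m (i-1) y * E m (k+1) y)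
        ≤ ((m:ℝ)-k) * (E m i y * E m k y) := by
      rcases eq_or_lt_of_le hkm with heq | hlt
      · rw [heq]; simp
      · exact mul_le_mul_of_nonneg_left (IH i k hi hik (by omega) y hy0)
          (by push_cast; linarith)
    have he : (((i:ℝ)-1) * ((m:ℝ)-k)) * (E m (i-1-1) y * E m (k+1) y)
        ≤ (((i:ℝ)-1) * ((m:ℝ)-k)) * (E m (i-1) y * E m k y) := by
      rcases eq_or_lt_of_le hi with heq | hlt2
      · rw [← heq]; norm_num
      · rcases eq_or_lt_of_le hkm with heq | hltk
        · rw [heq]; norm_num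
        · have h := IH (i-1) k (by omega) (by omega) (by omega) y hy0
          exact mul_le_mul_of_nonneg_left h
            (mul_nonneg (by push_cast; linarith) (by push_cast; linarith))
    have hf : ((i:ℝ)-1) * (E m (i-1-1) y * E m k y)
        ≤ ((i:ℝ)-1) * (E m (i-1) y * E m (k-1) y) := by
      rcases eq_or_lt_of_le hi with heq | hlt2
      · rw [← heq]; norm_num
      · have h := IH (i-1) (k-1) (by omega) (by omega) (by omega) y hy0
        have hkk : k - 1 + 1 = k := by omega
        rw [hkk] at h
        exact mul_le_mul_of_nonneg_left h (by push_cast; linarith)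
    -- the quadratic
    have hb2 : (E m (i-1) y * E m k y)^2
        ≤ (E m (i-1) y * E m (k-1) y) * (E m i y * E m k y) := by
      have h := mul_le_mul_of_nonneg_left hbc' (mul_nonneg (hA (i-1)) (hA k))
      linarith [h]
    have hquad : 0 ≤ E m i y * E m k y - 2*t*(E m (i-1) y * E m k y)
        + (E m (i-1) y * E m (k-1) y)*t^2 := by
      rcases (mul_nonneg (hA (i-1)) (hA (k-1))).eq_or_lt with h0 | hpos
      · have hb0 : E m (i-1) y * E m k y = 0 := by
          rw [← h0] at hb2
          have h1 : (E m (i-1) y * E m k y)^2 ≤ 0 := by linarith [hb2]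
          exact pow_eq_zero_iff (by norm_num) |>.1 (le_antisymm h1 (sq_nonneg _))
        have hz : (E m (i-1) y * E m (k-1) y) * t^2 = 0 := by rw [← h0]; ring
        have hz2 : 2*t*(E m (i-1) y * E m k y) = 0 := by rw [hb0]; ring
        rw [hz, hz2]
        simpa using mul_nonneg (hA i) (hA k)
      · have key : 0 ≤ (E m (i-1) y * E m (k-1) y) * (E m i y * E m k y
            - 2*t*(E m (i-1) y * E m k y) + (E m (i-1) y * E m (k-1) y)*t^2) := by
          linarith [hb2, sq_nonneg ((E m (i-1) y * E m (k-1) y)*t - E m (i-1) y * E m k y)]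
        exact (mul_nonneg_iff_of_pos_left hpos).1 key
    -- scaled versions
    have He := mul_le_mul_of_nonneg_left he ht
    have Hf : t^2 * (((k:ℝ)+1) * (((i:ℝ)-1) * (E m (i-1-1) y * E m k y)))
        ≤ t^2 * (((k:ℝ)+1) * (((i:ℝ)-1) * (E m (i-1) y * E m (k-1) y))) := by
      apply mul_le_mul_of_nonneg_left _ (by positivity : (0:ℝ) ≤ t^2)
      exact mul_le_mul_of_nonneg_left hf (by positivity)
    have Hc : t * (((k:ℝ)*((m:ℝ)+1-i)) * (E m (i-1) y * E m k y))
        ≤ t * (((k:ℝ)*((m:ℝ)+1-i)) * (E m i y * E m (k-1) y)) := by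
      apply mul_le_mul_of_nonneg_left _ ht
      apply mul_le_mul_of_nonneg_left hbc'
      apply mul_nonneg (by positivity) (by linarith)
    have Hd := mul_le_mul_of_nonneg_left hd (by linarith : (0:ℝ) ≤ (m:ℝ)+2-i)
    have Hq : 0 ≤ ((k:ℝ)-i+1) * (E m i y * E m k y - 2*t*(E m (i-1) y * E m k y)
        + (E m (i-1) y * E m (k-1) y)*t^2) := mul_nonneg (by linarith) hquad
    -- assemble
    have key2 : (((m+1:ℕ):ℝ) * E (m+1) (i-1) x) * (((m+1:ℕ):ℝ) * E (m+1) (k+1) x)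
        ≤ (((m+1:ℕ):ℝ) * E (m+1) i x) * (((m+1:ℕ):ℝ) * E (m+1) k x) := by
      rw [hri, hrk, hri1, hrk1]
      have hident :
          (((m:ℝ)+1-i) * E m i y + (i:ℝ) * t * E m (i-1) y)
            * (((m:ℝ)+1-k) * E m k y + (k:ℝ) * t * E m (k-1) y)
          - (((m:ℝ)+1-((i:ℝ)-1)) * E m (i-1) y + ((i:ℝ)-1) * t * E m (i-1-1) y)
            * (((m:ℝ)-k) * E m (k+1) y + ((k:ℝ)+1) * t * E m k y)
          = ((k:ℝ)-i+1) * (E m i y * E m k y - 2*t*(E m (i-1) y * E m k y)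
              + (E m (i-1) y * E m (k-1) y)*t^2)
            + (((m:ℝ)+2-i) * (((m:ℝ)-k) * (E m i y * E m k y))
              - ((m:ℝ)+2-i) * (((m:ℝ)-k) * (E m (i-1) y * E m (k+1) y)))
            + (t * ((((i:ℝ)-1) * ((m:ℝ)-k)) * (E m (i-1) y * E m k y))
              - t * ((((i:ℝ)-1) * ((m:ℝ)-k)) * (E m (i-1-1) y * E m (k+1) y)))
            + (t^2 * (((k:ℝ)+1) * (((i:ℝ)-1) * (E m (i-1) y * E m (k-1) y)))
              - t^2 * (((k:ℝ)+1) * (((i:ℝ)-1) * (E m (i-1-1) y * E m k y))))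
            + (t * (((k:ℝ)*((m:ℝ)+1-i)) * (E m i y * E m (k-1) y))
              - t * (((k:ℝ)*((m:ℝ)+1-i)) * (E m (i-1) y * E m k y))) := by
        ring
      linarith [He, Hf, Hc, Hd, Hq, hident]
    have hNN : (0:ℝ) < ((m+1:ℕ):ℝ) * ((m+1:ℕ):ℝ) := by positivity
    refine le_of_mul_le_mul_left ?_ hNN
    calc ((m+1:ℕ):ℝ) * ((m+1:ℕ):ℝ) * (E (m+1) (i-1) x * E (m+1) (k+1) x)
        = (((m+1:ℕ):ℝ) * E (m+1) (i-1) x) * (((m+1:ℕ):ℝ) * E (m+1) (k+1) x) := by ring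
      _ ≤ (((m+1:ℕ):ℝ) * E (m+1) i x) * (((m+1:ℕ):ℝ) * E (m+1) k x) := key2
      _ = ((m+1:ℕ):ℝ) * ((m+1:ℕ):ℝ) * (E (m+1) i x * E (m+1) k x) := by ring

theorem generalized_newton (n i k : ℕ) (hi : 1 ≤ i) (hik : i ≤ k) (hk : k + 1 ≤ n)
    (x : Fin n → ℝ) (hx : ∀ j, 0 ≤ x j) :
    E n (i - 1) x * E n (k + 1) x ≤ E n i x * E n k x := by
  exact main_ind n i k hi hik hk x hx
end

section
/- For nonnegative reals x₁,…,xₙ and integers n ≥ p ≥ q ≥ r ≥ 0, one has E_q(x)^{p−r} ≥ E_p(x)^{q−r} · E_r(x)^{p−q} (Lyapunov-type generalization of Maclaurin's inequality). -/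
open Finset

section Abstract

variable {a : ℕ → ℝ}

/-- Lemma B: ratios decreasing. -/
lemma lemB (ha : ∀ k, 0 ≤ a k) (hlc : ∀ k, a k * a (k+2) ≤ a (k+1)^2)
    (hz : ∀ k, a k = 0 → a (k+1) = 0) :
    ∀ l k, k ≤ l → a k * a (l+1) ≤ a (k+1) * a l := by
  intro l
  induction l with
  | zero => intro k hk; interval_cases k; exact le_of_eq (mul_comm _ _)
  | succ l ih =>
    intro k hk
    rcases Nat.eq_or_lt_of_le hk with h | h
    · subst h; exact le_of_eq (mul_comm _ _)
    · have hk' : k ≤ l := Nat.lt_succ_iff.mp h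
      have h1 := ih k hk'
      have h2 := hlc l
      rcases eq_or_lt_of_le (ha l) with h0 | h0
      · have : a (l+1) = 0 := hz l h0.symm
        have : a (l+2) = 0 := hz (l+1) this
        rw [this]
        simpa using mul_nonneg (ha (k+1)) (ha (l+1))
      rcases eq_or_lt_of_le (ha (l+1)) with h0' | h0'
      · have : a (l+2) = 0 := hz (l+1) h0'.symm
        rw [this]
        simpa using mul_nonneg (ha (k+1)) (ha (l+1))
      nlinarith [ha k, ha (k+1), ha (l+2), mul_nonneg (ha k) (ha (l+2))]

/-- Lemma D. -/
lemma lemD (ha : ∀ k, 0 ≤ a k) (hlc : ∀ k, a k * a (k+2) ≤ a (k+1)^2)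
    (hz : ∀ k, a k = 0 → a (k+1) = 0) :
    ∀ p q r, r ≤ q → q ≤ p → a (p+1) ^ (q - r) * a r ≤ a p ^ (q - r) * a q := by
  intro p q r hrq hqp
  induction q with
  | zero => interval_cases r; simp
  | succ q ih =>
    rcases Nat.eq_or_lt_of_le hrq with h | h
    · subst h; simp
    · have hrq' : r ≤ q := Nat.lt_succ_iff.mp h
      have hqp' : q ≤ p := le_trans (Nat.le_succ q) hqp
      have ihq := ih hrq' hqp'
      have hB : a q * a (p+1) ≤ a (q+1) * a p := lemB ha hlc hz p q hqp'
      have e1 : q + 1 - r = (q - r) + 1 := by omega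
      rw [e1, pow_succ, pow_succ]
      calc a (p+1) ^ (q-r) * a (p+1) * a r
          = a (p+1) * (a (p+1) ^ (q-r) * a r) := by ring
        _ ≤ a (p+1) * (a p ^ (q-r) * a q) :=
            mul_le_mul_of_nonneg_left ihq (ha (p+1))
        _ = (a q * a (p+1)) * a p ^ (q-r) := by ring
        _ ≤ (a (q+1) * a p) * a p ^ (q-r) :=
            mul_le_mul_of_nonneg_right hB (pow_nonneg (ha p) _)
        _ = a p ^ (q-r) * a p * a (q+1) := by ring

/-- Lyapunov for log-concave sequences. -/
lemma lyapunov_abstract (ha : ∀ k, 0 ≤ a k) (hlc : ∀ k, a k * a (k+2) ≤ a (k+1)^2)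
    (hz : ∀ k, a k = 0 → a (k+1) = 0) {p q r : ℕ} (hrq : r ≤ q) (hqp : q ≤ p) :
    a p ^ (q - r) * a r ^ (p - q) ≤ a q ^ (p - r) := by
  induction p with
  | zero => interval_cases q; interval_cases r; simp
  | succ p ih =>
    rcases Nat.eq_or_lt_of_le hqp with h | h
    · subst h
      simp [Nat.sub_self]
    · have hqp' : q ≤ p := Nat.lt_succ_iff.mp h
      have ihp := ih hqp'
      have hD := lemD ha hlc hz p q r hrq hqp'
      have e1 : p + 1 - q = (p - q) + 1 := by omega
      have e2 : p + 1 - r = (p - r) + 1 := by omega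
      rw [e1, e2, pow_succ, pow_succ]
      calc a (p+1) ^ (q-r) * (a r ^ (p-q) * a r)
          = (a (p+1) ^ (q-r) * a r) * a r ^ (p-q) := by ring
        _ ≤ (a p ^ (q-r) * a q) * a r ^ (p-q) :=
            mul_le_mul_of_nonneg_right hD (pow_nonneg (ha r) _)
        _ = (a p ^ (q-r) * a r ^ (p-q)) * a q := by ring
        _ ≤ a q ^ (p-r) * a q :=
            mul_le_mul_of_nonneg_right ihp (ha q)

end Abstract

section Step

lemma newton_step (N : ℕ) (hN : 1 ≤ N) (x : ℝ) (hx : 0 ≤ x) (a c : ℕ → ℝ)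
    (ha : ∀ k, 0 ≤ a k) (hlc : ∀ k, a k * a (k+2) ≤ a (k+1)^2)
    (hz : ∀ k, a k = 0 → a (k+1) = 0)
    (htop : ∀ m, N ≤ m → a m = 0)
    (hc : ∀ k, (N:ℝ) * c k = ((N:ℝ) - k) * a k + k * x * a (k-1)) :
    (∀ k, c k * c (k+2) ≤ c (k+1)^2) ∧ (∀ k, c k = 0 → c (k+1) = 0) ∧
      (∀ m, N + 1 ≤ m → c m = 0) := by
  have hNpos : (0:ℝ) < N := by exact_mod_cast hN
  have ctop : ∀ m, N + 1 ≤ m → c m = 0 := by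
    intro m hm
    have h1 : a m = 0 := htop m (by omega)
    have h2 : a (m-1) = 0 := htop (m-1) (by omega)
    have := hc m
    rw [h1, h2] at this
    have : (N:ℝ) * c m = 0 := by linarith [this]
    exact (mul_eq_zero.mp this).resolve_left (ne_of_gt hNpos)
  refine ⟨?_, ?_, ctop⟩
  · -- log-concavity
    intro k
    by_cases hk2 : k + 2 ≤ N
    · -- main case
      have key : ((N:ℝ) * c k) * ((N:ℝ) * c (k+2)) ≤ ((N:ℝ) * c (k+1))^2 := by
        rcases Nat.eq_zero_or_pos k with rfl | hk1
        · -- k = 0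
          rw [hc 0, hc 1, hc 2]
          have h2 : (2:ℝ) ≤ (N:ℝ) := by exact_mod_cast hk2
          have t1 : 0 ≤ (N:ℝ) * ((N:ℝ) - 2) * (a 1 ^2 - a 0 * a 2) :=
            mul_nonneg (mul_nonneg (le_of_lt hNpos) (by linarith))
              (by nlinarith [hlc 0])
          have t4 : 0 ≤ (a 1 - x * a 0)^2 := sq_nonneg _
          push_cast
          nlinarith [t1, t4]
        · -- k ≥ 1
          obtain ⟨j, rfl⟩ : ∃ j, k = j + 1 := ⟨k - 1, by omega⟩
          have h3 : ((j:ℝ) + 3) ≤ (N:ℝ) := by exact_mod_cast hk2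
          simp only [show j+1+2 = j+3 from rfl, show j+1+1 = j+2 from rfl]
          rw [hc (j+1), hc (j+2), hc (j+3)]
          simp only [show j+1-1 = j from rfl, show j+2-1 = j+1 from rfl,
            show j+3-1 = j+2 from rfl]
          have t1 : 0 ≤ ((N:ℝ) - (j+1)) * ((N:ℝ) - (j+3)) *
              (a (j+2)^2 - a (j+1) * a (j+3)) :=
            mul_nonneg (mul_nonneg (by linarith) (by linarith))
              (by nlinarith [hlc (j+1)])
          have t2 : 0 ≤ ((j:ℝ)+1) * ((N:ℝ) - (j+3)) * x *
              (a (j+1) * a (j+2) - a j * a (j+3)) :=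
            mul_nonneg (mul_nonneg (mul_nonneg (by positivity) (by linarith)) hx)
              (by nlinarith [lemB ha hlc hz (j+2) j (by omega)])
          have t3 : 0 ≤ ((j:ℝ)+1) * ((j:ℝ)+3) * x^2 *
              (a (j+1)^2 - a j * a (j+2)) :=
            mul_nonneg (mul_nonneg (mul_nonneg (by positivity) (by positivity))
              (sq_nonneg x)) (by nlinarith [hlc j])
          have t4 : 0 ≤ (a (j+2) - x * a (j+1))^2 := sq_nonneg _
          push_cast
          nlinarith [t1, t2, t3, t4]
      have h2 : (N:ℝ)^2 * (c k * c (k+2)) ≤ (N:ℝ)^2 * c (k+1)^2 := by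
        nlinarith [key]
      exact le_of_mul_le_mul_left h2 (by positivity)
    · -- top case : c (k+2) = 0
      have h1 : a (k+2) = 0 := htop _ (by omega)
      have h2 : a (k+1) = 0 := htop _ (by omega)
      have hck2 : c (k+2) = 0 := by
        have := hc (k+2)
        simp only [show k+2-1 = k+1 from rfl, h1, h2, mul_zero, zero_mul, add_zero] at this
        have h0 : (N:ℝ) * c (k+2) = 0 := by linarith [this]
        exact (mul_eq_zero.mp h0).resolve_left (ne_of_gt hNpos)
      rw [hck2, mul_zero]
      positivity
  · -- zero propagation
    intro k hck
    by_cases hkN : N ≤ k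
    · exact ctop (k+1) (by omega)
    · push_neg at hkN
      have hcoef : (0:ℝ) ≤ (N:ℝ) - k := by
        have : (k:ℝ) < N := by exact_mod_cast hkN
        linarith
      have h0 : ((N:ℝ) - k) * a k + k * x * a (k-1) = 0 := by
        rw [← hc k, hck, mul_zero]
      have hterm1 : 0 ≤ ((N:ℝ) - k) * a k := mul_nonneg hcoef (ha k)
      have hterm2 : 0 ≤ (k:ℝ) * x * a (k-1) :=
        mul_nonneg (mul_nonneg (by positivity) hx) (ha _)
      have hak : ((N:ℝ) - k) * a k = 0 := by linarith
      have hcoefpos : (0:ℝ) < (N:ℝ) - k := by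
        have : (k:ℝ) < N := by exact_mod_cast hkN
        linarith
      have hak0 : a k = 0 := by
        rcases mul_eq_zero.mp hak with h | h
        · exact absurd h (ne_of_gt hcoefpos)
        · exact h
      have hak1 : a (k+1) = 0 := hz k hak0
      have : (N:ℝ) * c (k+1) = 0 := by
        rw [hc (k+1)]
        simp [show k+1-1 = k from rfl, hak0, hak1]
      exact (mul_eq_zero.mp this).resolve_left (ne_of_gt hNpos)

end Step

section Combinatorial

variable {ι : Type*} [DecidableEq ι]

/-- Normalized elementary symmetric function over a finset. -/
noncomputable def Ee (x : ι → ℝ) (s : Finset ι) (m : ℕ) : ℝ :=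
  ((s.card.choose m : ℝ))⁻¹ * ∑ t ∈ powersetCard m s, ∏ i ∈ t, x i

lemma Ee_nonneg (x : ι → ℝ) (hx : ∀ i, 0 ≤ x i) (s : Finset ι) (m : ℕ) :
    0 ≤ Ee x s m := by
  unfold Ee
  apply mul_nonneg (by positivity)
  exact Finset.sum_nonneg fun t _ => Finset.prod_nonneg fun i _ => hx i

lemma Ee_top (x : ι → ℝ) {s : Finset ι} {m : ℕ} (h : s.card < m) : Ee x s m = 0 := by
  unfold Ee
  rw [powersetCard_eq_empty.mpr h, Finset.sum_empty, mul_zero]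

lemma Ee_zero (x : ι → ℝ) (s : Finset ι) : Ee x s 0 = 1 := by
  simp [Ee]

lemma choose_mul_Ee (x : ι → ℝ) (s : Finset ι) (m : ℕ) :
    (s.card.choose m : ℝ) * Ee x s m = ∑ t ∈ powersetCard m s, ∏ i ∈ t, x i := by
  by_cases h : m ≤ s.card
  · unfold Ee
    rw [← mul_assoc, mul_inv_cancel₀, one_mul]
    exact_mod_cast (Nat.choose_pos h).ne'
  · push_neg at h
    rw [Nat.choose_eq_zero_of_lt h, powersetCard_eq_empty.mpr h, Finset.sum_empty]
    simp

lemma esum_insert (x : ι → ℝ) {a : ι} {s : Finset ι} (ha : a ∉ s) (m : ℕ) :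
    ∑ t ∈ powersetCard (m+1) (insert a s), ∏ i ∈ t, x i
      = (∑ t ∈ powersetCard (m+1) s, ∏ i ∈ t, x i)
        + x a * ∑ t ∈ powersetCard m s, ∏ i ∈ t, x i := by
  rw [powersetCard_succ_insert ha m]
  rw [Finset.sum_union]
  · congr 1
    rw [Finset.sum_image]
    · rw [Finset.mul_sum]
      apply Finset.sum_congr rfl
      intro t ht
      have hts : t ⊆ s := (Finset.mem_powersetCard.mp ht).1
      have hat : a ∉ t := fun h => ha (hts h)
      rw [Finset.prod_insert hat]
    · intro t1 h1 t2 h2 he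
      have h1s : t1 ⊆ s := (Finset.mem_powersetCard.mp h1).1
      have h2s : t2 ⊆ s := (Finset.mem_powersetCard.mp h2).1
      have ha1 : a ∉ t1 := fun h => ha (h1s h)
      have ha2 : a ∉ t2 := fun h => ha (h2s h)
      rw [← Finset.erase_insert ha1, he, Finset.erase_insert ha2]
  · rw [Finset.disjoint_left]
    intro t ht ht'
    have hts : t ⊆ s := (Finset.mem_powersetCard.mp ht).1
    obtain ⟨u, _, rfl⟩ := Finset.mem_image.mp ht'
    exact ha (hts (Finset.mem_insert_self a u))

lemma Ee_rec (x : ι → ℝ) {a : ι} {s : Finset ι} (ha : a ∉ s) (k : ℕ) :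
    ((s.card + 1 : ℕ) : ℝ) * Ee x (insert a s) k
      = (((s.card + 1 : ℕ) : ℝ) - k) * Ee x s k + k * x a * Ee x s (k - 1) := by
  set n := s.card with hn
  rcases Nat.eq_zero_or_pos k with rfl | hk
  · simp [Ee_zero]
  obtain ⟨j, rfl⟩ : ∃ j, k = j + 1 := ⟨k - 1, by omega⟩
  simp only [show j + 1 - 1 = j from rfl]
  by_cases hkn : j + 1 ≤ n + 1
  · have hC : (0:ℝ) < ((n+1).choose (j+1) : ℝ) := by
      exact_mod_cast Nat.choose_pos hkn
    have hins : Ee x (insert a s) (j+1) =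
        (((n+1).choose (j+1) : ℝ))⁻¹ *
          ((n.choose (j+1) : ℝ) * Ee x s (j+1) + x a * ((n.choose j : ℝ) * Ee x s j)) := by
      rw [choose_mul_Ee, choose_mul_Ee]
      unfold Ee
      rw [Finset.card_insert_of_notMem ha, ← hn, esum_insert x ha j]
    rw [hins]
    have h1 : ((n+1:ℕ):ℝ) * (n.choose (j+1) : ℝ)
        = ((n+1-(j+1):ℕ):ℝ) * (((n+1).choose (j+1)) : ℝ) := by
      exact_mod_cast congrArg (Nat.cast (R := ℝ)) (by
        rw [mul_comm, Nat.choose_mul_succ_eq, mul_comm] : (n+1) * n.choose (j+1)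
          = (n+1-(j+1)) * ((n+1).choose (j+1)))
    have h2 : ((n+1:ℕ):ℝ) * (n.choose j : ℝ)
        = ((j+1:ℕ):ℝ) * (((n+1).choose (j+1)) : ℝ) := by
      exact_mod_cast congrArg (Nat.cast (R := ℝ)) (by
        rw [Nat.add_one_mul_choose_eq n j, mul_comm] : (n+1) * n.choose j
          = (j+1) * ((n+1).choose (j+1)))
    have hsub : ((n+1-(j+1):ℕ):ℝ) = ((n+1:ℕ):ℝ) - ((j+1:ℕ):ℝ) :=
      Nat.cast_sub hkn
    rw [← hsub]
    field_simp
    push_cast at h1 h2 ⊢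
    have hsub2 : ((n-j:ℕ):ℝ) = (n:ℝ) - j := Nat.cast_sub (by omega)
    linear_combination Ee x s (j+1) * h1 + (x a * Ee x s j) * h2
  · push_neg at hkn
    have h1 : Ee x (insert a s) (j+1) = 0 := by
      apply Ee_top
      rw [Finset.card_insert_of_notMem ha, ← hn]; omega
    have h2 : Ee x s (j+1) = 0 := Ee_top x (by omega)
    have h3 : Ee x s j = 0 := Ee_top x (by omega)
    rw [h1, h2, h3]
    ring

lemma newton_Ee (x : ι → ℝ) (hx : ∀ i, 0 ≤ x i) (s : Finset ι) :
    (∀ k, Ee x s k * Ee x s (k+2) ≤ Ee x s (k+1)^2) ∧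
      (∀ k, Ee x s k = 0 → Ee x s (k+1) = 0) := by
  induction s using Finset.induction_on with
  | empty =>
    constructor
    · intro k
      have h2 : Ee x (∅ : Finset ι) (k+2) = 0 := Ee_top x (by simp)
      rw [h2, mul_zero]
      exact sq_nonneg _
    · intro k _
      exact Ee_top x (by simp)
  | @insert a s ha ih =>
    obtain ⟨h1, h2, _⟩ := newton_step (s.card + 1) (by omega) (x a) (hx a)
      (Ee x s) (Ee x (insert a s)) (Ee_nonneg x hx s) ih.1 ih.2
      (fun m hm => Ee_top x (by omega)) (fun k => Ee_rec x ha k)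
    exact ⟨h1, h2⟩

end Combinatorial

theorem maclaurin_lyapunov (n p q r : ℕ) (hqp : q ≤ p) (hrq : r ≤ q) (hpn : p ≤ n)
    (x : Fin n → ℝ) (hx : ∀ j, 0 ≤ x j) :
    E n p x ^ (q - r) * E n r x ^ (p - q) ≤ E n q x ^ (p - r) := by
  have hE : ∀ m, E n m x = Ee x (univ : Finset (Fin n)) m := by
    intro m
    simp [E, Ee]
  obtain ⟨hlc, hz⟩ := newton_Ee x hx (univ : Finset (Fin n))
  simp only [hE]
  exact lyapunov_abstract (Ee_nonneg x hx _) hlc hz hrq hqp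
end

section
/- Let P(x₁,…,xₙ,y₁,…,yₙ) = Π_{i=1}^n (x_iⁿ + y_iⁿ) − (Π_{i=1}^n x_i + Π_{i=1}^n y_i)ⁿ. Then P ∈ S_{2n}; equivalently, P(x₁²,…,xₙ²,y₁²,…,yₙ²) is a sum of squares of polynomials in ℝ[x₁,…,xₙ,y₁,…,yₙ] (Minkowski's inequality as a sum of squares). -/
open Finset MvPolynomial

/-- The Minkowski polynomial in `2n` variables `x₁,…,xₙ,y₁,…,yₙ`. -/
noncomputable def minkP (n : ℕ) : MvPolynomial (Fin n ⊕ Fin n) ℝ :=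
  (∏ i, (X (Sum.inl i) ^ n + X (Sum.inr i) ^ n)) -
    ((∏ i, X (Sum.inl i)) + ∏ i, X (Sum.inr i)) ^ n

namespace MinkSOS

theorem isSumSq_sq_mul {R : Type*} [CommSemiring R] (a : R) {q : R} (hq : IsSumSq q) :
    IsSumSq (a * a * q) := by
  induction hq with
  | zero => simpa using IsSumSq.zero
  | @sq_add b S hS ih =>
      have : a * a * (b * b + S) = (a * b) * (a * b) + a * a * S := by ring
      rw [this]
      exact IsSumSq.sq_add _ ih

theorem isSumSq_mul {R : Type*} [CommSemiring R] {p q : R} (hp : IsSumSq p) (hq : IsSumSq q) :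
    IsSumSq (p * q) := by
  induction hp with
  | zero => simpa using IsSumSq.zero
  | @sq_add a S hS ih =>
      have : (a * a + S) * q = a * a * q + S * q := by ring
      rw [this]
      exact (isSumSq_sq_mul a hq).add ih

variable {n : ℕ}

/-- The "good" predicate: substituting squares for the variables yields a sum of squares. -/
def Good (p : MvPolynomial (Fin n ⊕ Fin n) ℝ) : Prop :=
  IsSumSq (bind₁ (fun v : Fin n ⊕ Fin n => (X v : MvPolynomial (Fin n ⊕ Fin n) ℝ) ^ 2) p)

theorem Good.zero : Good (0 : MvPolynomial (Fin n ⊕ Fin n) ℝ) := by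
  unfold Good; rw [map_zero]; exact IsSumSq.zero

theorem Good.add {p q : MvPolynomial (Fin n ⊕ Fin n) ℝ} (hp : Good p) (hq : Good q) :
    Good (p + q) := by
  unfold Good at *; rw [map_add]; exact hp.add hq

theorem Good.mul {p q : MvPolynomial (Fin n ⊕ Fin n) ℝ} (hp : Good p) (hq : Good q) :
    Good (p * q) := by
  unfold Good at *; rw [map_mul]; exact isSumSq_mul hp hq

theorem Good.sq (p : MvPolynomial (Fin n ⊕ Fin n) ℝ) : Good (p ^ 2) := by
  unfold Good; rw [map_pow]
  have : (bind₁ (fun v : Fin n ⊕ Fin n => (X v : MvPolynomial (Fin n ⊕ Fin n) ℝ) ^ 2) p) ^ 2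
      = (bind₁ (fun v : Fin n ⊕ Fin n => (X v : MvPolynomial (Fin n ⊕ Fin n) ℝ) ^ 2) p) *
        (bind₁ (fun v : Fin n ⊕ Fin n => (X v : MvPolynomial (Fin n ⊕ Fin n) ℝ) ^ 2) p) + 0 := by
    ring
  rw [this]
  exact IsSumSq.sq_add _ IsSumSq.zero

theorem Good.var (v : Fin n ⊕ Fin n) : Good (X v : MvPolynomial (Fin n ⊕ Fin n) ℝ) := by
  unfold Good; rw [bind₁_X_right]
  have : (X v : MvPolynomial (Fin n ⊕ Fin n) ℝ) ^ 2 = X v * X v + 0 := by ring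
  rw [this]; exact IsSumSq.sq_add _ IsSumSq.zero

theorem Good.pow {p : MvPolynomial (Fin n ⊕ Fin n) ℝ} (hp : Good p) (k : ℕ) : Good (p ^ k) := by
  induction k with
  | zero => simpa [pow_zero] using (by simpa using (Good.sq (1 : MvPolynomial (Fin n ⊕ Fin n) ℝ)))
  | succ k ih => rw [pow_succ]; exact ih.mul hp

theorem Good.const {r : ℝ} (hr : 0 ≤ r) : Good (C r : MvPolynomial (Fin n ⊕ Fin n) ℝ) := by
  unfold Good; rw [bind₁_C_right]
  have : (C r : MvPolynomial (Fin n ⊕ Fin n) ℝ) = C (Real.sqrt r) * C (Real.sqrt r) + 0 := by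
    rw [← C_mul, Real.mul_self_sqrt hr, add_zero]
  rw [this]; exact IsSumSq.sq_add _ IsSumSq.zero

theorem Good.sum {ι : Type*} (s : Finset ι) (f : ι → MvPolynomial (Fin n ⊕ Fin n) ℝ)
    (h : ∀ i ∈ s, Good (f i)) : Good (∑ i ∈ s, f i) := by
  classical
  induction s using Finset.induction with
  | empty => simpa using Good.zero
  | insert _ _ hx ih =>
      rw [Finset.sum_insert hx]
      exact (h _ (Finset.mem_insert_self _ _)).add
        (ih fun i hi => h i (Finset.mem_insert_of_mem hi))

theorem Good.smul {p : MvPolynomial (Fin n ⊕ Fin n) ℝ} {r : ℝ} (hr : 0 ≤ r) (hp : Good p) :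
    Good (r • p) := by
  rw [smul_eq_C_mul]; exact (Good.const hr).mul hp

/-- Key factorization lemma: `(u^a - v^a) * ((u^b - v^b) * M)` is Good. -/
theorem good_L1 {u v M : MvPolynomial (Fin n ⊕ Fin n) ℝ} (hu : Good u) (hv : Good v)
    (hM : Good M) (a b : ℕ) : Good ((u ^ a - v ^ a) * ((u ^ b - v ^ b) * M)) := by
  rw [← geom_sum₂_mul u v a, ← geom_sum₂_mul u v b]
  have : (∑ i ∈ range a, u ^ i * v ^ (a - 1 - i)) * (u - v) *
      ((∑ i ∈ range b, u ^ i * v ^ (b - 1 - i)) * (u - v) * M) =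
      (u - v) ^ 2 * ((∑ i ∈ range a, u ^ i * v ^ (a - 1 - i)) *
        ((∑ i ∈ range b, u ^ i * v ^ (b - 1 - i)) * M)) := by ring
  rw [this]
  refine (Good.sq _).mul ?_
  refine (Good.sum _ _ fun i _ => (hu.pow i).mul (hv.pow _)).mul ?_
  exact (Good.sum _ _ fun i _ => (hu.pow i).mul (hv.pow _)).mul hM


theorem Good.one : Good (1 : MvPolynomial (Fin n ⊕ Fin n) ℝ) := by
  simpa using Good.sq (1 : MvPolynomial (Fin n ⊕ Fin n) ℝ)

theorem Good.prod {ι : Type*} (s : Finset ι) (f : ι → MvPolynomial (Fin n ⊕ Fin n) ℝ)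
    (h : ∀ i ∈ s, Good (f i)) : Good (∏ i ∈ s, f i) := by
  classical
  induction s using Finset.induction with
  | empty => simpa using Good.one
  | insert _ _ hx ih =>
      rw [Finset.prod_insert hx]
      exact (h _ (Finset.mem_insert_self _ _)).mul
        (ih fun i hi => h i (Finset.mem_insert_of_mem hi))

/-- One permutation term of the symmetrized sum. -/
noncomputable def fterm (n : ℕ) (c : Fin n → ℕ) (σ : Equiv.Perm (Fin n)) :
    MvPolynomial (Fin n ⊕ Fin n) ℝ :=
  ∏ i, (X (Sum.inl (σ i)) : MvPolynomial (Fin n ⊕ Fin n) ℝ) ^ (c i) * X (Sum.inr (σ i)) ^ (n - c i)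

/-- The symmetrized (Muirhead-type) sum attached to an exponent vector `c`. -/
noncomputable def Psi (n : ℕ) (c : Fin n → ℕ) : MvPolynomial (Fin n ⊕ Fin n) ℝ :=
  ∑ σ : Equiv.Perm (Fin n), fterm n c σ

theorem good_fterm (c : Fin n → ℕ) (σ : Equiv.Perm (Fin n)) : Good (fterm n c σ) :=
  Good.prod _ _ fun i _ => ((Good.var _).pow _).mul ((Good.var _).pow _)

theorem fterm_split (c : Fin n → ℕ) (σ : Equiv.Perm (Fin n)) {i₀ j₀ : Fin n} (h : j₀ ≠ i₀) :
    fterm n c σ =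
      (X (Sum.inl (σ i₀)) : MvPolynomial (Fin n ⊕ Fin n) ℝ) ^ (c i₀) *
          X (Sum.inr (σ i₀)) ^ (n - c i₀) *
        (X (Sum.inl (σ j₀)) ^ (c j₀) * X (Sum.inr (σ j₀)) ^ (n - c j₀) *
          ∏ i ∈ (univ.erase i₀).erase j₀,
            X (Sum.inl (σ i)) ^ (c i) * X (Sum.inr (σ i)) ^ (n - c i)) := by
  rw [fterm, ← Finset.mul_prod_erase univ _ (mem_univ i₀),
    ← Finset.mul_prod_erase (univ.erase i₀) _ (Finset.mem_erase.2 ⟨h, mem_univ j₀⟩)]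

/-- A single Muirhead transfer step stays Good. -/
theorem good_step {c : Fin n → ℕ} {i₀ j₀ : Fin n} (hij : i₀ ≠ j₀)
    (hpn : c i₀ ≤ n) (hd : c j₀ + 2 ≤ c i₀) :
    Good (Psi n c - Psi n (Function.update (Function.update c i₀ (c i₀ - 1)) j₀ (c j₀ + 1))) := by
  classical
  set c' := Function.update (Function.update c i₀ (c i₀ - 1)) j₀ (c j₀ + 1) with hc'
  have hji : j₀ ≠ i₀ := hij.symm
  obtain ⟨m, hm⟩ : ∃ m, c i₀ = c j₀ + m + 2 := ⟨c i₀ - c j₀ - 2, by omega⟩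
  obtain ⟨e, he⟩ : ∃ e, n = c i₀ + e := ⟨n - c i₀, by omega⟩
  set τ := Equiv.swap i₀ j₀ with hτ
  have hc'i₀ : c' i₀ = c j₀ + m + 1 := by
    rw [hc', Function.update_of_ne hij, Function.update_self]; omega
  have hc'j₀ : c' j₀ = c j₀ + 1 := by rw [hc', Function.update_self]
  have hc'other : ∀ i, i ≠ i₀ → i ≠ j₀ → c' i = c i := fun i h1 h2 => by
    rw [hc', Function.update_of_ne h2, Function.update_of_ne h1]
  have hre : ∀ d : Fin n → ℕ, ∑ σ : Equiv.Perm (Fin n), fterm n d (σ * τ) = Psi n d :=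
    fun d => Equiv.sum_comp (Equiv.mulRight τ) (fterm n d)
  have hP : ∀ d : Fin n → ℕ, (∑ σ : Equiv.Perm (Fin n), fterm n d σ) = Psi n d := fun d => rfl
  have main : Psi n c - Psi n c' = (1/2 : ℝ) •
      ∑ σ : Equiv.Perm (Fin n),
        (fterm n c σ + fterm n c (σ * τ) - (fterm n c' σ + fterm n c' (σ * τ))) := by
    rw [Finset.sum_sub_distrib, Finset.sum_add_distrib, Finset.sum_add_distrib,
      hre c, hre c', hP c, hP c']
    module
  rw [main]
  refine Good.smul (by norm_num) (Good.sum _ _ fun σ _ => ?_)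
  have hστi : (σ * τ) i₀ = σ j₀ := by
    rw [Equiv.Perm.mul_apply, hτ, Equiv.swap_apply_left]
  have hστj : (σ * τ) j₀ = σ i₀ := by
    rw [Equiv.Perm.mul_apply, hτ, Equiv.swap_apply_right]
  have hστo : ∀ i : Fin n, i ∈ (univ.erase i₀).erase j₀ → (σ * τ) i = σ i := by
    intro i hi
    rw [Finset.mem_erase, Finset.mem_erase] at hi
    rw [Equiv.Perm.mul_apply, hτ, Equiv.swap_apply_of_ne_of_ne hi.2.1 hi.1]
  set A := ∏ i ∈ (univ.erase i₀).erase j₀,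
      (X (Sum.inl (σ i)) : MvPolynomial (Fin n ⊕ Fin n) ℝ) ^ (c i) * X (Sum.inr (σ i)) ^ (n - c i)
    with hA
  set xu := (X (Sum.inl (σ i₀)) : MvPolynomial (Fin n ⊕ Fin n) ℝ) with hxu
  set yu := (X (Sum.inr (σ i₀)) : MvPolynomial (Fin n ⊕ Fin n) ℝ) with hyu
  set xv := (X (Sum.inl (σ j₀)) : MvPolynomial (Fin n ⊕ Fin n) ℝ) with hxv
  set yv := (X (Sum.inr (σ j₀)) : MvPolynomial (Fin n ⊕ Fin n) ℝ) with hyv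
  have hAc' : ∀ ρ : Equiv.Perm (Fin n), (∀ i ∈ (univ.erase i₀).erase j₀, ρ i = σ i) →
      ∀ d : Fin n → ℕ, (∀ i, i ≠ i₀ → i ≠ j₀ → d i = c i) →
      (∏ i ∈ (univ.erase i₀).erase j₀,
        (X (Sum.inl (ρ i)) : MvPolynomial (Fin n ⊕ Fin n) ℝ) ^ (d i) *
          X (Sum.inr (ρ i)) ^ (n - d i)) = A := by
    intro ρ hρ d hdc
    refine Finset.prod_congr rfl fun i hi => ?_
    have h1 : i ≠ j₀ := (Finset.mem_erase.1 hi).1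
    have h2 : i ≠ i₀ := (Finset.mem_erase.1 (Finset.mem_erase.1 hi).2).1
    rw [hρ i hi, hdc i h2 h1]
  have h1 : fterm n c σ = xu ^ (c j₀ + m + 2) * yu ^ e * (xv ^ (c j₀) * yv ^ (m + 2 + e) * A) := by
    rw [fterm_split c σ hji,
      show n - c i₀ = e by omega, show n - c j₀ = m + 2 + e by omega,
      show c i₀ = c j₀ + m + 2 from hm]
  have h2 : fterm n c (σ * τ) =
      xv ^ (c j₀ + m + 2) * yv ^ e * (xu ^ (c j₀) * yu ^ (m + 2 + e) * A) := by
    rw [fterm_split c (σ * τ) hji, hστi, hστj, hAc' (σ * τ) hστo c fun _ _ _ => rfl,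
      show n - c i₀ = e by omega, show n - c j₀ = m + 2 + e by omega,
      show c i₀ = c j₀ + m + 2 from hm]
  have h3 : fterm n c' σ =
      xu ^ (c j₀ + m + 1) * yu ^ (e + 1) * (xv ^ (c j₀ + 1) * yv ^ (m + 1 + e) * A) := by
    rw [fterm_split c' σ hji, hAc' σ (fun _ _ => rfl) c' hc'other,
      show n - c' i₀ = e + 1 by omega, show n - c' j₀ = m + 1 + e by omega,
      show c' i₀ = c j₀ + m + 1 from hc'i₀, show c' j₀ = c j₀ + 1 from hc'j₀]
  have h4 : fterm n c' (σ * τ) =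
      xv ^ (c j₀ + m + 1) * yv ^ (e + 1) * (xu ^ (c j₀ + 1) * yu ^ (m + 1 + e) * A) := by
    rw [fterm_split c' (σ * τ) hji, hστi, hστj, hAc' (σ * τ) hστo c' hc'other,
      show n - c' i₀ = e + 1 by omega, show n - c' j₀ = m + 1 + e by omega,
      show c' i₀ = c j₀ + m + 1 from hc'i₀, show c' j₀ = c j₀ + 1 from hc'j₀]
  rw [h1, h2, h3, h4,
    show xu ^ (c j₀ + m + 2) * yu ^ e * (xv ^ (c j₀) * yv ^ (m + 2 + e) * A) +
        xv ^ (c j₀ + m + 2) * yv ^ e * (xu ^ (c j₀) * yu ^ (m + 2 + e) * A) -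
        (xu ^ (c j₀ + m + 1) * yu ^ (e + 1) * (xv ^ (c j₀ + 1) * yv ^ (m + 1 + e) * A) +
          xv ^ (c j₀ + m + 1) * yv ^ (e + 1) * (xu ^ (c j₀ + 1) * yu ^ (m + 1 + e) * A)) =
      ((xu * yv) ^ (m + 1) - (xv * yu) ^ (m + 1)) * (((xu * yv) ^ 1 - (xv * yu) ^ 1) *
        (xu ^ (c j₀) * yu ^ e * xv ^ (c j₀) * yv ^ e * A)) from by ring]
  exact good_L1 ((Good.var _).mul (Good.var _)) ((Good.var _).mul (Good.var _))
    ((((((Good.var _).pow _).mul ((Good.var _).pow _)).mul ((Good.var _).pow _)).mul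
      ((Good.var _).pow _)).mul (Good.prod _ _ fun i _ => ((Good.var _).pow _).mul
        ((Good.var _).pow _))) (m + 1) 1


/-- Muirhead-style descent: any admissible exponent vector dominates the constant one. -/
theorem good_psi_sub_aux (k : ℕ) :
    ∀ N (c : Fin n → ℕ), (∀ i, c i ≤ n) → (∑ i, c i = n * k) → (∑ i, c i * c i ≤ N) →
      Good (Psi n c - Psi n (fun _ => k)) := by
  intro N
  induction N with
  | zero =>
      intro c hle hsum hm
      have h0 : ∑ i, c i * c i = 0 := Nat.le_antisymm hm (Nat.zero_le _)
      have hz : ∀ i, c i = 0 := by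
        intro i
        have := (Finset.sum_eq_zero_iff.1 h0) i (mem_univ i)
        exact mul_self_eq_zero.1 this
      have hc : c = fun _ => k := by
        rcases Nat.eq_zero_or_pos n with hn | hn
        · funext i; exact absurd i.2 (by omega)
        · have hs0 : ∑ i, c i = 0 := Finset.sum_eq_zero fun i _ => hz i
          have hk : k = 0 := by
            rw [hs0] at hsum
            exact (Nat.mul_eq_zero.1 hsum.symm).resolve_left (by omega)
          funext i; rw [hz i, hk]
      rw [hc, sub_self]; exact Good.zero
  | succ N IH =>
      intro c hle hsum hm
      by_cases hc : c = fun _ => k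
      · rw [hc, sub_self]; exact Good.zero
      · have hne : ∃ i, c i ≠ k := by
          by_contra h2; push_neg at h2; exact hc (funext h2)
        have hcard : ∑ _i : Fin n, k = n * k := by
          rw [Finset.sum_const, Finset.card_univ, Fintype.card_fin, smul_eq_mul]
        have hex1 : ∃ i, k < c i := by
          by_contra h; push_neg at h
          obtain ⟨i, hi⟩ := hne
          have : ∑ j, c j < ∑ _j : Fin n, k :=
            Finset.sum_lt_sum (fun j _ => h j) ⟨i, mem_univ i, lt_of_le_of_ne (h i) hi⟩
          omega
        have hex2 : ∃ j, c j < k := by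
          by_contra h; push_neg at h
          obtain ⟨i, hi⟩ := hne
          have : ∑ _j : Fin n, k < ∑ j, c j :=
            Finset.sum_lt_sum (fun j _ => h j) ⟨i, mem_univ i, lt_of_le_of_ne (h i) (Ne.symm hi)⟩
          omega
        obtain ⟨i₀, hi₀⟩ := hex1
        obtain ⟨j₀, hj₀⟩ := hex2
        have hij : i₀ ≠ j₀ := by intro h; rw [h] at hi₀; omega
        have hji : j₀ ≠ i₀ := hij.symm
        set c' := Function.update (Function.update c i₀ (c i₀ - 1)) j₀ (c j₀ + 1) with hc'def
        have hc'i₀ : c' i₀ = c i₀ - 1 := by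
          rw [hc'def, Function.update_of_ne hij, Function.update_self]
        have hc'j₀ : c' j₀ = c j₀ + 1 := by rw [hc'def, Function.update_self]
        have hc'other : ∀ i, i ≠ i₀ → i ≠ j₀ → c' i = c i := fun i h1 h2 => by
          rw [hc'def, Function.update_of_ne h2, Function.update_of_ne h1]
        have hsplit : ∀ g : Fin n → ℕ,
            ∑ i, g i = g j₀ + (g i₀ + ∑ i ∈ (univ.erase j₀).erase i₀, g i) := by
          intro g
          rw [← Finset.add_sum_erase univ g (mem_univ j₀),
            ← Finset.add_sum_erase (univ.erase j₀) g (Finset.mem_erase.2 ⟨hij, mem_univ i₀⟩)]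
        have hsame : ∀ g g' : Fin n → ℕ, (∀ i, i ≠ i₀ → i ≠ j₀ → g i = g' i) →
            ∑ i ∈ (univ.erase j₀).erase i₀, g i = ∑ i ∈ (univ.erase j₀).erase i₀, g' i := by
          intro g g' hgg'
          refine Finset.sum_congr rfl fun i hi => ?_
          have h1 : i ≠ i₀ := (Finset.mem_erase.1 hi).1
          have h2 : i ≠ j₀ := (Finset.mem_erase.1 (Finset.mem_erase.1 hi).2).1
          exact hgg' i h1 h2
        have hs1 := hsplit c
        have hs2 := hsplit c'
        have hs3 := hsplit (fun i => c i * c i)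
        have hs4 := hsplit (fun i => c' i * c' i)
        have hEs : ∑ i ∈ (univ.erase j₀).erase i₀, c' i = ∑ i ∈ (univ.erase j₀).erase i₀, c i :=
          hsame _ _ fun i h1 h2 => hc'other i h1 h2
        have hEs2 : ∑ i ∈ (univ.erase j₀).erase i₀, c' i * c' i
            = ∑ i ∈ (univ.erase j₀).erase i₀, c i * c i :=
          hsame _ _ fun i h1 h2 => by rw [hc'other i h1 h2]
        obtain ⟨d, hd2⟩ : ∃ d, c i₀ = c j₀ + d + 2 := ⟨c i₀ - c j₀ - 2, by omega⟩
        have hle' : ∀ i, c' i ≤ n := by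
          intro i
          rcases eq_or_ne i i₀ with h | h
          · rw [h, hc'i₀]; have := hle i₀; omega
          rcases eq_or_ne i j₀ with h2 | h2
          · rw [h2, hc'j₀]; have := hle i₀; omega
          · rw [hc'other i h h2]; exact hle i
        have hsum' : ∑ i, c' i = n * k := by
          rw [hs2, hc'i₀, hc'j₀, hEs]; omega
        have hm' : ∑ i, c' i * c' i ≤ N := by
          have e3 : c i₀ - 1 = c j₀ + d + 1 := by omega
          have hval : ∑ i, c' i * c' i = (c j₀ + 1) * (c j₀ + 1) +
              ((c j₀ + d + 1) * (c j₀ + d + 1) + ∑ i ∈ (univ.erase j₀).erase i₀, c i * c i) := by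
            rw [hs4, hc'i₀, hc'j₀, hEs2, e3]
          rw [hs3, hd2] at hm
          have e1 : (c j₀ + 1) * (c j₀ + 1) = c j₀ * c j₀ + 2 * c j₀ + 1 := by ring
          have e2 : (c j₀ + d + 2) * (c j₀ + d + 2)
              = (c j₀ + d + 1) * (c j₀ + d + 1) + 2 * (c j₀ + d) + 3 := by ring
          omega
        have hstep := good_step hij (hle i₀) (by omega)
        have hIH := IH c' hle' hsum' hm'
        have hdecomp : Psi n c - Psi n (fun _ => k)
            = (Psi n c - Psi n c') + (Psi n c' - Psi n (fun _ => k)) := by ring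
        rw [hdecomp]
        exact hstep.add hIH

theorem good_psi_sub (k : ℕ) (c : Fin n → ℕ) (hle : ∀ i, c i ≤ n)
    (hsum : ∑ i, c i = n * k) : Good (Psi n c - Psi n (fun _ => k)) :=
  good_psi_sub_aux k (∑ i, c i * c i) c hle hsum le_rfl


/-- The exponent vector attached to a subset. -/
def cT (T : Finset (Fin n)) : Fin n → ℕ := fun i => if i ∈ T then n else 0

theorem claimA :
    ∑ k ∈ range (n + 1), ∑ T ∈ powersetCard k (univ : Finset (Fin n)), Psi n (cT T)
      = n.factorial • ∏ i, ((X (Sum.inl i) : MvPolynomial (Fin n ⊕ Fin n) ℝ) ^ n + X (Sum.inr i) ^ n) := by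
  classical
  have hcard : (univ : Finset (Fin n)).card = n := by simp
  have h1 : ∑ k ∈ range (n + 1), ∑ T ∈ powersetCard k (univ : Finset (Fin n)), Psi n (cT T)
      = ∑ T ∈ (univ : Finset (Fin n)).powerset, Psi n (cT T) := by
    rw [Finset.sum_powerset, hcard]
  rw [h1]
  simp only [Psi]
  rw [Finset.sum_comm]
  have h2 : ∀ σ : Equiv.Perm (Fin n),
      ∑ T ∈ (univ : Finset (Fin n)).powerset, fterm n (cT T) σ
        = ∏ i, ((X (Sum.inl i) : MvPolynomial (Fin n ⊕ Fin n) ℝ) ^ n + X (Sum.inr i) ^ n) := by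
    intro σ
    have hterm : ∀ T ∈ (univ : Finset (Fin n)).powerset, fterm n (cT T) σ =
        (∏ i ∈ T, (X (Sum.inl (σ i)) : MvPolynomial (Fin n ⊕ Fin n) ℝ) ^ n) *
          ∏ i ∈ univ \ T, (X (Sum.inr (σ i)) : MvPolynomial (Fin n ⊕ Fin n) ℝ) ^ n := by
      intro T _
      have : fterm n (cT T) σ = ∏ i, (if i ∈ T
          then (X (Sum.inl (σ i)) : MvPolynomial (Fin n ⊕ Fin n) ℝ) ^ n
          else (X (Sum.inr (σ i)) : MvPolynomial (Fin n ⊕ Fin n) ℝ) ^ n) := by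
        rw [fterm]
        refine Finset.prod_congr rfl fun i _ => ?_
        by_cases hi : i ∈ T
        · simp [cT, hi]
        · simp [cT, hi]
      rw [this, Finset.prod_ite, Finset.filter_mem_eq_inter, Finset.univ_inter,
        ← Finset.sdiff_eq_filter]
    rw [Finset.sum_congr rfl hterm, ← Finset.prod_add]
    exact Equiv.prod_comp σ fun a =>
      (X (Sum.inl a) : MvPolynomial (Fin n ⊕ Fin n) ℝ) ^ n + X (Sum.inr a) ^ n
  rw [Finset.sum_congr rfl fun σ _ => h2 σ, Finset.sum_const, Finset.card_univ,
    Fintype.card_perm, Fintype.card_fin]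

theorem claimB :
    ∑ k ∈ range (n + 1), ∑ _T ∈ powersetCard k (univ : Finset (Fin n)),
        Psi n (fun _ => k)
      = n.factorial • ((∏ i, (X (Sum.inl i) : MvPolynomial (Fin n ⊕ Fin n) ℝ)) + ∏ i, X (Sum.inr i)) ^ n
    := by
  classical
  have hPsiConst : ∀ k : ℕ, Psi n (fun _ => k)
      = n.factorial • ((∏ i, (X (Sum.inl i) : MvPolynomial (Fin n ⊕ Fin n) ℝ)) ^ k *
          (∏ i, (X (Sum.inr i) : MvPolynomial (Fin n ⊕ Fin n) ℝ)) ^ (n - k)) := by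
    intro k
    have hf : ∀ σ : Equiv.Perm (Fin n), fterm n (fun _ => k) σ
        = (∏ i, (X (Sum.inl i) : MvPolynomial (Fin n ⊕ Fin n) ℝ)) ^ k *
          (∏ i, (X (Sum.inr i) : MvPolynomial (Fin n ⊕ Fin n) ℝ)) ^ (n - k) := by
      intro σ
      rw [fterm, Finset.prod_mul_distrib]
      congr 1
      · rw [Equiv.prod_comp σ fun a => (X (Sum.inl a) : MvPolynomial (Fin n ⊕ Fin n) ℝ) ^ k,
          Finset.prod_pow]
      · rw [Equiv.prod_comp σ fun a => (X (Sum.inr a) : MvPolynomial (Fin n ⊕ Fin n) ℝ) ^ (n - k),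
          Finset.prod_pow]
    rw [Psi, Finset.sum_congr rfl fun σ _ => hf σ, Finset.sum_const, Finset.card_univ,
      Fintype.card_perm, Fintype.card_fin]
  have hcard : (univ : Finset (Fin n)).card = n := by simp
  rw [add_pow]
  rw [Finset.smul_sum]
  refine Finset.sum_congr rfl fun k hk => ?_
  rw [Finset.sum_const, Finset.card_powersetCard, hcard, hPsiConst k, smul_smul]
  rw [nsmul_eq_mul, nsmul_eq_mul]
  push_cast
  ring

theorem good_minkP : Good (minkP n) := by
  classical
  have hkey : n.factorial • minkP n = ∑ k ∈ range (n + 1),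
      ∑ T ∈ powersetCard k (univ : Finset (Fin n)), (Psi n (cT T) - Psi n (fun _ => k)) := by
    rw [minkP, smul_sub, ← claimA, ← claimB]
    rw [← Finset.sum_sub_distrib]
    refine Finset.sum_congr rfl fun k _ => ?_
    rw [← Finset.sum_sub_distrib]
  have hG : Good (n.factorial • minkP n) := by
    rw [hkey]
    refine Good.sum _ _ fun k _ => Good.sum _ _ fun T hT => ?_
    have hTcard : T.card = k := (Finset.mem_powersetCard.1 hT).2
    refine good_psi_sub k (cT T) (fun i => ?_) ?_
    · by_cases hi : i ∈ T <;> simp [cT, hi]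
    · have : ∑ i, cT T i = ∑ i ∈ univ ∩ T, n := by
        rw [← Finset.sum_ite_mem]
        rfl
      rw [this, Finset.univ_inter, Finset.sum_const, hTcard, smul_eq_mul, mul_comm]
  have hpos : (0 : ℝ) < (n.factorial : ℝ) := by positivity
  have : minkP n = ((n.factorial : ℝ))⁻¹ • (n.factorial • minkP n) := by
    rw [← Nat.cast_smul_eq_nsmul ℝ, smul_smul, inv_mul_cancel₀ (ne_of_gt hpos), one_smul]
  rw [this]
  exact Good.smul (by positivity) hG


end MinkSOS

theorem minkowski_sos (n : ℕ) :
    IsSumSq (bind₁ (fun v : Fin n ⊕ Fin n => (X v : MvPolynomial (Fin n ⊕ Fin n) ℝ) ^ 2)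
      (minkP n)) := by
  have h := MinkSOS.good_minkP (n := n)
  unfold MinkSOS.Good at h
  exact h
end

section
/- For each 0 ≤ k ≤ n, the polynomial Σ_{I ⊆ {1,…,n}, |I|=k} (Π_{i∈I} x_iⁿ · Π_{j∉I} y_jⁿ) − C(n,k) · Π_{i=1}^n x_i^k y_i^{n−k} is nonnegative for all nonnegative reals x₁,…,xₙ,y₁,…,yₙ. -/
open Finset

/-- Number of `(k+1)`-subsets of `s` containing a fixed element `a ∈ s`. -/
lemma card_filter_mem_powersetCard {α : Type*} [DecidableEq α] (s : Finset α) (a : α)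
    (ha : a ∈ s) (k : ℕ) :
    ((powersetCard (k + 1) s).filter (fun I => a ∈ I)).card = (s.card - 1).choose k := by
  rw [← card_erase_of_mem ha, ← Finset.card_powersetCard k (s.erase a)]
  refine Finset.card_bij' (fun I _ => I.erase a) (fun J _ => insert a J) ?_ ?_ ?_ ?_
  · intro I hI
    rw [mem_filter, mem_powersetCard] at hI
    rw [mem_powersetCard]
    refine ⟨erase_subset_erase a hI.1.1, ?_⟩
    rw [card_erase_of_mem hI.2, hI.1.2]
    omega
  · intro J hJ
    rw [mem_powersetCard] at hJ
    have haJ : a ∉ J := fun h => (mem_erase.1 (hJ.1 h)).1 rfl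
    rw [mem_filter, mem_powersetCard]
    refine ⟨⟨?_, ?_⟩, mem_insert_self a J⟩
    · exact insert_subset ha (hJ.1.trans (erase_subset a s))
    · rw [card_insert_of_notMem haJ, hJ.2]
  · intro I hI
    rw [mem_filter, mem_powersetCard] at hI
    exact insert_erase hI.2
  · intro J hJ
    rw [mem_powersetCard] at hJ
    have haJ : a ∉ J := fun h => (mem_erase.1 (hJ.1 h)).1 rfl
    exact erase_insert haJ

theorem minkowski_term_nonneg (n k : ℕ) (hk : k ≤ n)
    (x y : Fin n → ℝ) (hx : ∀ i, 0 ≤ x i) (hy : ∀ i, 0 ≤ y i) :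
    0 ≤ (∑ I ∈ powersetCard k (univ : Finset (Fin n)),
          (∏ i ∈ I, x i ^ n) * ∏ j ∈ Iᶜ, y j ^ n) -
        (n.choose k : ℝ) * ∏ i, x i ^ k * y i ^ (n - k) := by
  rw [sub_nonneg]
  set N := n.choose k with hN
  have hNpos : 0 < N := Nat.choose_pos hk
  set P := powersetCard k (univ : Finset (Fin n)) with hP
  set z : Finset (Fin n) → ℝ := fun I => (∏ i ∈ I, x i ^ n) * ∏ j ∈ Iᶜ, y j ^ n with hzdef
  have hz : ∀ I, 0 ≤ z I := fun I =>
    mul_nonneg (prod_nonneg fun i _ => pow_nonneg (hx i) n)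
      (prod_nonneg fun j _ => pow_nonneg (hy j) n)
  have hcardP : P.card = N := by
    rw [hP, card_powersetCard, card_univ, Fintype.card_fin]
  -- rewrite each term as a product over all indices
  have hzite : ∀ I : Finset (Fin n), z I = ∏ i, (if i ∈ I then x i ^ n else y i ^ n) := by
    intro I
    have h1 : (univ.filter (fun j => j ∈ I)) = I := by
      ext j; simp
    have h2 : (univ.filter (fun j => j ∉ I)) = Iᶜ := by
      ext j; simp
    rw [Finset.prod_ite, h1, h2]
  -- counting: exponents of geometric mean
  have hcount : ∀ i : Fin n, n * (P.filter (fun I => i ∈ I)).card = k * N := by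
    intro i
    rcases Nat.eq_zero_or_pos k with hk0 | hkpos
    · subst hk0
      have : (P.filter (fun I => i ∈ I)) = ∅ := by
        apply Finset.filter_false_of_mem
        intro I hI
        rw [hP, Finset.mem_powersetCard] at hI
        rw [Finset.card_eq_zero.1 hI.2]
        simp
      simp [this]
    · obtain ⟨k', rfl⟩ : ∃ k', k = k' + 1 := ⟨k - 1, by omega⟩
      obtain ⟨m, rfl⟩ : ∃ m, n = m + 1 := ⟨n - 1, by omega⟩
      rw [hP, card_filter_mem_powersetCard _ _ (mem_univ i)]
      rw [card_univ, Fintype.card_fin, Nat.add_sub_cancel, hN]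
      rw [Nat.add_one_mul_choose_eq]
      exact Nat.mul_comm _ _
  have hcount' : ∀ i : Fin n, n * (P.filter (fun I => ¬ i ∈ I)).card = (n - k) * N := by
    intro i
    have hsplit := Finset.card_filter_add_card_filter_not (s := P)
      (p := fun I => i ∈ I)
    rw [hcardP] at hsplit
    have h1 := hcount i
    have h2 : n * N = k * N + n * (P.filter (fun I => ¬ i ∈ I)).card := by
      rw [← h1, ← Nat.mul_add, hsplit]
    have h3 : n * N = k * N + (n - k) * N := by
      rw [← Nat.add_mul, Nat.add_sub_cancel' hk]
    omega
  -- the product of all terms equals the N-th power of the symmetric product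
  have hprod : ∏ I ∈ P, z I = (∏ i, x i ^ k * y i ^ (n - k)) ^ N := by
    calc ∏ I ∈ P, z I = ∏ I ∈ P, ∏ i, (if i ∈ I then x i ^ n else y i ^ n) :=
          Finset.prod_congr rfl fun I _ => hzite I
      _ = ∏ i, ∏ I ∈ P, (if i ∈ I then x i ^ n else y i ^ n) := Finset.prod_comm
      _ = ∏ i, (x i ^ n) ^ (P.filter (fun I => i ∈ I)).card *
            (y i ^ n) ^ (P.filter (fun I => ¬ i ∈ I)).card := by
          refine Finset.prod_congr rfl fun i _ => ?_
          rw [Finset.prod_ite, Finset.prod_const, Finset.prod_const]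
      _ = ∏ i, (x i ^ k * y i ^ (n - k)) ^ N := by
          refine Finset.prod_congr rfl fun i _ => ?_
          rw [mul_pow, ← pow_mul, ← pow_mul, ← pow_mul, ← pow_mul,
            hcount i, hcount' i]
      _ = (∏ i, x i ^ k * y i ^ (n - k)) ^ N := Finset.prod_pow _ _ _
  -- AM-GM
  set Q : ℝ := ∏ i, x i ^ k * y i ^ (n - k) with hQdef
  have hQ : 0 ≤ Q := prod_nonneg fun i _ =>
    mul_nonneg (pow_nonneg (hx i) k) (pow_nonneg (hy i) (n - k))
  have hw : ∑ _I ∈ P, (N : ℝ)⁻¹ = 1 := by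
    rw [Finset.sum_const, hcardP, nsmul_eq_mul, mul_inv_cancel₀]
    exact_mod_cast hNpos.ne'
  have key := Real.geom_mean_le_arith_mean_weighted P (fun _ => (N : ℝ)⁻¹) z
    (fun _ _ => by positivity) hw (fun I _ => hz I)
  have hGMeq : ∏ I ∈ P, z I ^ ((N : ℝ)⁻¹) = Q := by
    rw [Real.finset_prod_rpow P z (fun I _ => hz I), hprod,
      ← Real.rpow_natCast Q N, ← Real.rpow_mul hQ, mul_inv_cancel₀, Real.rpow_one]
    exact_mod_cast hNpos.ne'
  rw [hGMeq] at key
  have hsum : ∑ I ∈ P, (N : ℝ)⁻¹ * z I = (N : ℝ)⁻¹ * ∑ I ∈ P, z I := by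
    rw [Finset.mul_sum]
  rw [hsum] at key
  have hNR : (0 : ℝ) < (N : ℝ) := by exact_mod_cast hNpos
  calc (N : ℝ) * Q ≤ (N : ℝ) * ((N : ℝ)⁻¹ * ∑ I ∈ P, z I) := by
        exact mul_le_mul_of_nonneg_left key hNR.le
    _ = ∑ I ∈ P, z I := by
        rw [← mul_assoc, mul_inv_cancel₀ hNR.ne', one_mul]
end
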